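/- arXiv:2102.10221 — 6 statements merged into one kernel-verified Lean document; each statement's English description precedes it below -/
import Mathlib

section
/- Let F be a twice continuously differentiable, strictly increasing CDF with density f such that 1−F is strictly log-concave, and define g(v,u) = v·(1−F(v−u)). Then for every u ≥ 0 there exists a unique v* ≥ 0 maximizing v ↦ g(v,u) over ℝ. -/
/-- For a C², strictly increasing CDF `F` with positive density,
values strictly between 0 and 1, and `1 - F` strictly log-concave, for every
`u ≥ 0` there is a unique `v* ≥ 0` maximizing `v ↦ v * (1 - F (v - u))` over ℝ. -/
theorem stmt_1 (F : ℝ → ℝ) (hF : ContDiff ℝ 2 F) (hmono : StrictMono F)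
    (hf : ∀ ω, 0 < deriv F ω) (hF1 : ∀ ω, F ω < 1)
    (hlc : ∀ ω, deriv (deriv (fun ω => Real.log (1 - F ω))) ω < 0) :
    ∀ u : ℝ, 0 ≤ u →
      ∃! v : ℝ, 0 ≤ v ∧ ∀ w : ℝ, w * (1 - F (w - u)) ≤ v * (1 - F (v - u)) := by
  intro u hu
  have hFd : Differentiable ℝ F := hF.differentiable (by norm_num)
  have hpos : ∀ ω : ℝ, 0 < 1 - F ω := fun ω => by linarith [hF1 ω]
  set h : ℝ → ℝ := fun ω => Real.log (1 - F ω) with hh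
  set g : ℝ → ℝ := fun v => v * (1 - F (v - u)) with hgdef
  have hder : ∀ ω, HasDerivAt h (-(deriv F ω) / (1 - F ω)) ω := by
    intro ω
    have h1 : HasDerivAt (fun ω => 1 - F ω) (0 - deriv F ω) ω :=
      (hasDerivAt_const ω (1:ℝ)).sub (hFd ω).hasDerivAt
    have := h1.log (ne_of_gt (hpos ω))
    simpa using this
  have hhd : Differentiable ℝ h := fun ω => (hder ω).differentiableAt
  -- strict concavity of h
  have hconc : StrictConcaveOn ℝ Set.univ h := by
    apply strictConcaveOn_of_deriv2_neg convex_univ hhd.continuous.continuousOn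
    intro x _
    exact hlc x
  -- deriv h is strictly decreasing
  have hdanti : StrictAnti (deriv h) := by
    apply strictAnti_of_deriv_neg
    intro x
    exact hlc x
  have hd0 : deriv h 0 = -(deriv F 0) / (1 - F 0) := (hder 0).deriv
  set c : ℝ := deriv F 0 / (1 - F 0) with hcdef
  have hcpos : 0 < c := div_pos (hf 0) (hpos 0)
  have hd0' : deriv h 0 = -c := by rw [hd0, hcdef, neg_div]
  -- tangent line bound: h x ≤ h 0 - c x for x > 0
  have hbound : ∀ x : ℝ, 0 < x → h x ≤ h 0 - c * x := by
    intro x hx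
    obtain ⟨y, hy, hyd⟩ := exists_deriv_eq_slope h hx hhd.continuous.continuousOn
      (fun z _ => (hhd z).differentiableWithinAt)
    have h1 : deriv h y < deriv h 0 := hdanti hy.1
    rw [hd0'] at h1
    rw [hyd] at h1
    have := h1
    rw [sub_zero] at this
    have hx' : x ≠ 0 := ne_of_gt hx
    have : (h x - h 0) / x < -c := this
    nlinarith [(div_lt_iff₀ hx).mp this]
  -- exponential bound on 1 - F
  have hexp : ∀ ω : ℝ, 1 - F ω = Real.exp (h ω) := fun ω => (Real.exp_log (hpos ω)).symm
  -- g tends to 0 at infinity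
  have htend : Filter.Tendsto g Filter.atTop (nhds 0) := by
    have hkey : Filter.Tendsto (fun v : ℝ => v * Real.exp (-(c * v))) Filter.atTop (nhds 0) := by
      have h1 : Filter.Tendsto (fun y : ℝ => y * Real.exp (-y)) Filter.atTop (nhds 0) := by
        simpa using Real.tendsto_pow_mul_exp_neg_atTop_nhds_zero 1
      have h2 : Filter.Tendsto (fun v : ℝ => c * v) Filter.atTop Filter.atTop :=
        Filter.Tendsto.const_mul_atTop hcpos Filter.tendsto_id
      have h3 := (h1.comp h2).const_mul (1/c)
      rw [mul_zero] at h3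
      refine h3.congr fun v => ?_
      field_simp
      simp [Function.comp_apply]
    have h4 := hkey.const_mul ((1 - F 0) * Real.exp (c * u))
    rw [mul_zero] at h4
    apply squeeze_zero' (g := fun v => (1 - F 0) * Real.exp (c * u) * (v * Real.exp (-(c * v))))
    · filter_upwards [Filter.eventually_ge_atTop (0:ℝ)] with v hv
      exact mul_nonneg hv (le_of_lt (hpos _))
    · filter_upwards [Filter.eventually_ge_atTop (u + 1)] with v hv
      have hvu : 0 < v - u := by linarith
      have hb := hbound (v - u) hvu
      have hv0 : 0 < v := by linarith
      have : 1 - F (v - u) ≤ (1 - F 0) * Real.exp (c * u) * Real.exp (-(c * v)) := by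
        rw [hexp (v - u)]
        calc Real.exp (h (v - u)) ≤ Real.exp (h 0 - c * (v - u)) := Real.exp_le_exp.mpr hb
          _ = (1 - F 0) * Real.exp (c * u) * Real.exp (-(c * v)) := by
              rw [show h 0 - c * (v - u) = h 0 + c * u + -(c * v) by ring,
                Real.exp_add, Real.exp_add, Real.exp_log (hpos 0)]
      calc g v = v * (1 - F (v - u)) := rfl
        _ ≤ v * ((1 - F 0) * Real.exp (c * u) * Real.exp (-(c * v))) :=
            mul_le_mul_of_nonneg_left this (le_of_lt hv0)
        _ = (1 - F 0) * Real.exp (c * u) * (v * Real.exp (-(c * v))) := by ring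
    · exact h4
  have hg1 : 0 < g 1 := mul_pos one_pos (hpos _)
  obtain ⟨M, hM⟩ := Filter.eventually_atTop.mp (htend.eventually_lt_const hg1)
  set M' : ℝ := max M 1 with hM'def
  have hgcont : Continuous g := by
    apply continuous_id.mul
    exact continuous_const.sub (hF.continuous.comp (continuous_id.sub continuous_const))
  obtain ⟨v0, hv0mem, hv0max⟩ := isCompact_Icc.exists_isMaxOn (s := Set.Icc (0:ℝ) M')
    ⟨0, Set.left_mem_Icc.mpr (le_trans zero_le_one (le_max_right M 1))⟩ hgcont.continuousOn
  have h1mem : (1:ℝ) ∈ Set.Icc (0:ℝ) M' := ⟨zero_le_one, le_max_right _ _⟩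
  have hgv0 : g 1 ≤ g v0 := hv0max h1mem
  have hglobal : ∀ w : ℝ, g w ≤ g v0 := by
    intro w
    rcases lt_or_ge w 0 with hw | hw
    · have : g w < 0 := mul_neg_of_neg_of_pos hw (hpos _)
      linarith
    · rcases le_or_gt w M' with hw2 | hw2
      · exact hv0max ⟨hw, hw2⟩
      · have : g w < g 1 := hM w (le_of_lt (lt_of_le_of_lt (le_max_left M 1) hw2))
        linarith
  -- positivity of maximizers
  have hmaxpos : ∀ v : ℝ, 0 ≤ v → (∀ w : ℝ, g w ≤ g v) → 0 < v := by
    intro v hv hmax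
    rcases eq_or_lt_of_le hv with rfl | h
    · exfalso
      have hz : g 0 = 0 := by simp [hgdef]
      have := hmax 1
      linarith
    · exact h
  -- uniqueness via strict concavity of log g
  set L : ℝ → ℝ := fun v => Real.log v + h (v - u) with hLdef
  have hgL : ∀ v : ℝ, 0 < v → g v = Real.exp (L v) := by
    intro v hv
    rw [hLdef]
    simp only
    rw [Real.exp_add, Real.exp_log hv, ← hexp]
  have huniq : ∀ v1 v2 : ℝ, 0 < v1 → 0 < v2 → (∀ w : ℝ, g w ≤ g v1) →
      (∀ w : ℝ, g w ≤ g v2) → v1 = v2 := by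
    intro v1 v2 h1 h2 hm1 hm2
    by_contra hne
    set m : ℝ := (1/2 : ℝ) * v1 + (1/2 : ℝ) * v2 with hmdef
    have hmpos : 0 < m := by positivity
    have hgeq : g v1 = g v2 := le_antisymm (hm2 v1) (hm1 v2)
    have hLeq : L v1 = L v2 := by
      have := hgeq
      rw [hgL v1 h1, hgL v2 h2] at this
      exact Real.exp_injective this
    have hlog : (1/2 : ℝ) * Real.log v1 + (1/2 : ℝ) * Real.log v2 < Real.log m := by
      have := strictConcaveOn_log_Ioi.2 (Set.mem_Ioi.mpr h1) (Set.mem_Ioi.mpr h2) hne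
        (by norm_num : (0:ℝ) < 1/2) (by norm_num : (0:ℝ) < 1/2) (by norm_num)
      have heqm : (1/2 : ℝ) • v1 + (1/2 : ℝ) • v2 = m := by simp [smul_eq_mul, hmdef]
      rw [heqm] at this
      simpa [smul_eq_mul] using this
    have hhm : (1/2 : ℝ) * h (v1 - u) + (1/2 : ℝ) * h (v2 - u) ≤ h (m - u) := by
      have := hconc.concaveOn.2 (Set.mem_univ (v1 - u)) (Set.mem_univ (v2 - u))
        (by norm_num : (0:ℝ) ≤ 1/2) (by norm_num : (0:ℝ) ≤ 1/2) (by norm_num)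
      have heq : (1/2 : ℝ) • (v1 - u) + (1/2 : ℝ) • (v2 - u) = m - u := by
        simp [smul_eq_mul, hmdef]; ring
      rw [heq] at this
      simpa [smul_eq_mul] using this
    have hLm : L v1 < L m := by
      have : L v1 = (1/2 : ℝ) * L v1 + (1/2 : ℝ) * L v2 := by rw [hLeq]; ring
      rw [this, hLdef]
      simp only
      have expand : (1/2:ℝ) * (Real.log v1 + h (v1 - u)) + (1/2:ℝ) * (Real.log v2 + h (v2 - u))
          = ((1/2:ℝ) * Real.log v1 + (1/2:ℝ) * Real.log v2)
            + ((1/2:ℝ) * h (v1 - u) + (1/2:ℝ) * h (v2 - u)) := by ring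
      rw [expand]
      linarith
    have : g v1 < g m := by
      rw [hgL v1 h1, hgL m hmpos]
      exact Real.exp_lt_exp.mpr hLm
    exact absurd (hm1 m) (not_le.mpr this)
  refine ⟨v0, ⟨hv0mem.1, hglobal⟩, ?_⟩
  intro v' ⟨hv'0, hv'max⟩
  exact huniq v' v0 (hmaxpos v' hv'0 hv'max) (hmaxpos v0 hv0mem.1 hglobal) hv'max hglobal
end

section
/- Let F be a strictly log-concave, strictly increasing C² CDF with density f, and let J(u) be the unique maximizer of v ↦ v(1−F(v−u)). Then J is differentiable and 0 < J'(u) < 1 for all u ∈ ℝ; consequently J(u) < u + J(0) for all u > 0. -/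
/-- For a strictly log-concave, strictly increasing C² CDF `F`,
if `J u` is the unique maximizer of `v ↦ v * (1 - F (v - u))`, then `J` is
differentiable with `0 < J' < 1` everywhere, and `J u < u + J 0` for `u > 0`. -/
theorem stmt_2 (F : ℝ → ℝ) (hF : ContDiff ℝ 2 F) (hmono : StrictMono F)
    (hf : ∀ ω, 0 < deriv F ω) (hF1 : ∀ ω, F ω < 1)
    (hlc : ∀ ω, deriv (deriv (fun ω => Real.log (1 - F ω))) ω < 0)
    (J : ℝ → ℝ)
    (hJmax : ∀ u v : ℝ, v * (1 - F (v - u)) ≤ J u * (1 - F (J u - u)))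
    (hJuniq : ∀ u v : ℝ,
      (∀ w : ℝ, w * (1 - F (w - u)) ≤ v * (1 - F (v - u))) → v = J u) :
    Differentiable ℝ J ∧ (∀ u : ℝ, 0 < deriv J u ∧ deriv J u < 1) ∧
      (∀ u : ℝ, 0 < u → J u < u + J 0) := by
  have hFd2 := contDiff_succ_iff_deriv.mp (show ContDiff ℝ (1+1) F by exact_mod_cast hF)
  have hFdiff : Differentiable ℝ F := hFd2.1
  have hfdiff : Differentiable ℝ (deriv F) := hFd2.2.2.differentiable (by norm_num)
  set f : ℝ → ℝ := deriv F with hfdef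
  have h1pos : ∀ x, 0 < 1 - F x := fun x => by linarith [hF1 x]
  -- derivative of log (1 - F)
  have hL : ∀ x, HasDerivAt (fun ω => Real.log (1 - F ω)) (-f x / (1 - F x)) x := by
    intro x
    have h1 : HasDerivAt (fun ω => 1 - F ω) (-f x) x := by
      exact (hFdiff x).hasDerivAt.const_sub 1
    exact h1.log (ne_of_gt (h1pos x))
  have hLderiv : deriv (fun ω => Real.log (1 - F ω)) = fun x => -f x / (1 - F x) :=
    funext fun x => (hL x).deriv
  -- key positivity from log-concavity: f² + (1-F)·f' > 0
  have hkey : ∀ x, 0 < f x ^ 2 + (1 - F x) * deriv f x := by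
    intro x
    have h1 : HasDerivAt (fun ω => 1 - F ω) (-f x) x := by
      exact (hFdiff x).hasDerivAt.const_sub 1
    have hnum : HasDerivAt (fun ω => -f ω) (-(deriv f x)) x := ((hfdiff x).hasDerivAt).neg
    have hdd : HasDerivAt (fun x => -f x / (1 - F x))
        ((-(deriv f x) * (1 - F x) - (-f x) * (-f x)) / (1 - F x) ^ 2) x :=
      hnum.div h1 (ne_of_gt (h1pos x))
    have hlt := hlc x
    rw [hLderiv] at hlt
    rw [hdd.deriv] at hlt
    have hsq : 0 < (1 - F x) ^ 2 := pow_pos (h1pos x) 2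
    have hnumneg : -(deriv f x) * (1 - F x) - (-f x) * (-f x) < 0 := by
      by_contra h
      push_neg at h
      exact absurd (div_nonneg h (le_of_lt hsq)) (not_le.mpr hlt)
    nlinarith
  -- the auxiliary function ψ and its derivative
  set ψ : ℝ → ℝ := fun x => (1 - F x) / f x - x with hψdef
  set Dψ : ℝ → ℝ := fun x => (-(f x * f x) - (1 - F x) * deriv f x) / f x ^ 2 - 1 with hDψdef
  have hψd : ∀ x, HasDerivAt ψ (Dψ x) x := by
    intro x
    have h1 : HasDerivAt (fun ω => 1 - F ω) (-f x) x := by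
      exact (hFdiff x).hasDerivAt.const_sub 1
    have hq : HasDerivAt (fun x => (1 - F x) / f x)
        ((-(f x * f x) - (1 - F x) * deriv f x) / f x ^ 2) x := by
      have : HasDerivAt (fun x => (1 - F x) / f x) _ x := h1.div (hfdiff x).hasDerivAt (ne_of_gt (hf x))
      convert this using 1
      ring
    exact hq.sub (hasDerivAt_id x)
  have hDψlt : ∀ x, Dψ x < -1 := by
    intro x
    have hsq : 0 < f x ^ 2 := pow_pos (hf x) 2
    have : (-(f x * f x) - (1 - F x) * deriv f x) / f x ^ 2 < 0 := by
      apply div_neg_of_neg_of_pos _ hsq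
      nlinarith [hkey x]
    simp only [hDψdef]
    linarith
  have hψanti : StrictAnti ψ := by
    apply strictAnti_of_deriv_neg
    intro x
    rw [(hψd x).deriv]
    linarith [hDψlt x]
  -- first order condition: ψ (J u - u) = u
  set g : ℝ → ℝ := fun u => J u - u with hgdef
  have hFOC : ∀ u, ψ (g u) = u := by
    intro u
    have hmax : IsLocalMax (fun v => v * (1 - F (v - u))) (J u) :=
      Filter.Eventually.of_forall (hJmax u)
    have hdF : HasDerivAt (fun v => 1 - F (v - u)) (-f (J u - u)) (J u) := by
      have hin : HasDerivAt (fun v : ℝ => v - u) 1 (J u) := by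
        simpa using (hasDerivAt_id (J u)).sub_const u
      have := ((hFdiff (J u - u)).hasDerivAt).comp (J u) hin
      simpa using this.const_sub 1
    have htot : HasDerivAt (fun v => v * (1 - F (v - u)))
        (1 * (1 - F (J u - u)) + J u * (-f (J u - u))) (J u) :=
      (hasDerivAt_id (J u)).mul hdF
    have h0 := hmax.hasDerivAt_eq_zero htot
    have hfx := hf (J u - u)
    have heq : 1 - F (J u - u) = J u * f (J u - u) := by linarith [h0]
    simp only [hψdef, hgdef]
    rw [heq]
    field_simp
    ring
  have hψinj : Function.Injective ψ := hψanti.injective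
  have hganti : StrictAnti g := by
    intro a b hab
    by_contra h
    push_neg at h
    have : ψ (g b) ≤ ψ (g a) := hψanti.antitone h
    rw [hFOC a, hFOC b] at this
    linarith
  have hgsurj : Function.Surjective g := by
    intro x
    exact ⟨ψ x, hψinj (by rw [hFOC])⟩
  have hgcont : Continuous g := by
    have hmono' : StrictMono (fun x : ℝ => g (-x)) := fun a b hab => hganti (neg_lt_neg hab)
    have hsurj' : Function.Surjective (fun x : ℝ => g (-x)) := by
      intro x
      obtain ⟨y, hy⟩ := hgsurj x
      exact ⟨-y, by simpa using hy⟩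
    have hc := (StrictMono.orderIsoOfSurjective _ hmono' hsurj').continuous
    have hc2 : Continuous (fun x : ℝ => g (-(-x))) := hc.comp continuous_neg
    simpa using hc2
  -- differentiability of g and J
  have hgd : ∀ u, HasDerivAt g (Dψ (g u))⁻¹ u := by
    intro u
    exact HasDerivAt.of_local_left_inverse hgcont.continuousAt (hψd (g u))
      (by linarith [hDψlt (g u)]) (Filter.Eventually.of_forall hFOC)
  have hJd : ∀ u, HasDerivAt J ((Dψ (g u))⁻¹ + 1) u := by
    intro u
    have := (hgd u).add (hasDerivAt_id u)
    have heq : (g + id) = J := by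
      funext x; simp [hgdef]
    rwa [heq] at this
  have hinv : ∀ u, -1 < (Dψ (g u))⁻¹ ∧ (Dψ (g u))⁻¹ < 0 := by
    intro u
    have h1 := hDψlt (g u)
    have hne : Dψ (g u) ≠ 0 := by linarith
    have hneg : Dψ (g u) < 0 := by linarith
    constructor
    · have h2 : (-(Dψ (g u)))⁻¹ < 1 := inv_lt_one_of_one_lt₀ (by linarith)
      rw [inv_neg] at h2
      linarith
    · exact inv_lt_zero.mpr hneg
  refine ⟨fun u => (hJd u).differentiableAt, fun u => ?_, fun u hu => ?_⟩
  · rw [(hJd u).deriv]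
    obtain ⟨h1, h2⟩ := hinv u
    constructor <;> linarith
  · have := hganti hu
    simp only [hgdef] at this
    linarith
end

section
/- With the same negative log-likelihood l(θ) = −𝟙·log(1−F(v−xᵀθ)) − (1−𝟙)·log(F(v−xᵀθ)), the gradient satisfies ∇l(θ)∇l(θ)ᵀ ⪯ C_exp · x xᵀ, where C_exp = sup_{ω∈[−B,B+J(0)]} max{ f(ω)²/F(ω)², f(ω)²/(1−F(ω))² } < ∞. Consequently l is (C_down/C_exp)-exponentially concave: ∇²l(θ) ⪰ (C_down/C_exp) ∇l(θ)∇l(θ)ᵀ. -/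
open scoped RealInnerProductSpace

lemma comp_deriv_eq (G : ℝ → ℝ) (hG : Differentiable ℝ G) (c a : ℝ) :
    deriv (fun t : ℝ => G (c - a * t)) = fun t => -a * deriv G (c - a * t) := by
  funext t
  have h1 : HasDerivAt (fun t : ℝ => c - a * t) (-a) t := by
    simpa using ((hasDerivAt_id t).const_mul a).const_sub c
  have h2 := ((hG (c - a * t)).hasDerivAt.comp t h1)
  simpa [mul_comm, Function.comp_def] using h2.deriv

lemma comp_deriv2 (G : ℝ → ℝ) (hG : Differentiable ℝ G)
    (hG' : Differentiable ℝ (deriv G)) (c a : ℝ) :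
    deriv (deriv (fun t : ℝ => G (c - a * t))) 0 = a ^ 2 * deriv (deriv G) c := by
  rw [comp_deriv_eq G hG]
  have h1 : HasDerivAt (fun t : ℝ => c - a * t) (-a) 0 := by
    simpa using ((hasDerivAt_id (0:ℝ)).const_mul a).const_sub c
  have hd : DifferentiableAt ℝ (fun t : ℝ => deriv G (c - a * t)) 0 :=
    by have := (hG' (c - a * 0)).comp 0 h1.differentiableAt; exact this
  rw [deriv_const_mul _ hd, comp_deriv_eq (deriv G) hG']
  simp
  ring

/-- Gradient bound and exponential concavity of the negative
log-likelihood. With `l` as before, `∇l ∇lᵀ ⪯ C_exp • x xᵀ` (expressed via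
first directional derivatives), where `C_exp` is the supremum over the
compact interval of `max (f/F)² ((f/(1-F))²)`, which is finite; consequently
`l` is `(C_down / C_exp)`-exponentially concave:
`∇²l ⪰ (C_down / C_exp) ∇l ∇lᵀ`. -/
theorem stmt_5 (d : ℕ) (F : ℝ → ℝ) (hF : ContDiff ℝ 2 F) (hmono : StrictMono F)
    (hf : ∀ ω, 0 < deriv F ω) (hF01 : ∀ ω, 0 < F ω ∧ F ω < 1)
    (hlcF : ∀ ω, deriv (deriv (fun ω => Real.log (F ω))) ω < 0)
    (hlc1F : ∀ ω, deriv (deriv (fun ω => Real.log (1 - F ω))) ω < 0)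
    (x : EuclideanSpace ℝ (Fin d)) (v : ℝ) (ind : ℝ) (hind : ind = 0 ∨ ind = 1)
    (B J0 : ℝ) (hB : 0 < B)
    (l : EuclideanSpace ℝ (Fin d) → ℝ)
    (hl : l = fun θ => -ind * Real.log (1 - F (v - ⟪x, θ⟫)) -
      (1 - ind) * Real.log (F (v - ⟪x, θ⟫)))
    (Cdown : ℝ)
    (hCdown : Cdown = sInf ((fun ω =>
        min (deriv (deriv (fun ω => -Real.log (1 - F ω))) ω)
            (deriv (deriv (fun ω => -Real.log (F ω))) ω)) ''
      Set.Icc (-B) (B + J0)))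
    (Cexp : ℝ)
    (hCexp : Cexp = sSup ((fun ω =>
        max ((deriv F ω) ^ 2 / (F ω) ^ 2)
            ((deriv F ω) ^ 2 / (1 - F ω) ^ 2)) '' Set.Icc (-B) (B + J0))) :
    (∀ θ : EuclideanSpace ℝ (Fin d), v - ⟪x, θ⟫ ∈ Set.Icc (-B) (B + J0) →
      ∀ h : EuclideanSpace ℝ (Fin d),
        (deriv (fun t : ℝ => l (θ + t • h)) 0) ^ 2 ≤ Cexp * ⟪x, h⟫ ^ 2) ∧
    (∀ θ : EuclideanSpace ℝ (Fin d), v - ⟪x, θ⟫ ∈ Set.Icc (-B) (B + J0) →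
      ∀ h : EuclideanSpace ℝ (Fin d),
        (Cdown / Cexp) * (deriv (fun t : ℝ => l (θ + t • h)) 0) ^ 2 ≤
          deriv (deriv (fun t : ℝ => l (θ + t • h))) 0) := by
  have hFd : Differentiable ℝ F := hF.differentiable (by norm_num)
  have hfd : Differentiable ℝ (deriv F) := by
    have := (contDiff_succ_iff_deriv.mp (by exact_mod_cast hF : ContDiff ℝ (1+1) F)).2.2
    exact this.differentiable (by norm_num)
  have hFpos : ∀ ω, 0 < F ω := fun ω => (hF01 ω).1
  have h1Fpos : ∀ ω, 0 < 1 - F ω := fun ω => by linarith [(hF01 ω).2]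
  have hFne : ∀ ω, F ω ≠ 0 := fun ω => ne_of_gt (hFpos ω)
  have h1Fne : ∀ ω, (1:ℝ) - F ω ≠ 0 := fun ω => ne_of_gt (h1Fpos ω)
  have hlogF : ∀ ω, HasDerivAt (fun ω => Real.log (F ω)) (deriv F ω / F ω) ω := by
    intro ω
    simpa [div_eq_inv_mul, Function.comp_def] using (Real.hasDerivAt_log (hFne ω)).comp ω (hFd ω).hasDerivAt
  have hlog1F : ∀ ω, HasDerivAt (fun ω => Real.log (1 - F ω))
      (-(deriv F ω / (1 - F ω))) ω := by
    intro ω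
    have h0 : HasDerivAt (fun ω => 1 - F ω) (-(deriv F ω)) ω := (hFd ω).hasDerivAt.const_sub 1
    have := (Real.hasDerivAt_log (h1Fne ω)).comp ω h0
    simpa [div_eq_inv_mul, mul_comm, Function.comp_def] using this
  set GA : ℝ → ℝ := fun ω => -Real.log (1 - F ω) with hGA
  set GB : ℝ → ℝ := fun ω => -Real.log (F ω) with hGB
  have hGAd : ∀ ω, HasDerivAt GA (deriv F ω / (1 - F ω)) ω := by
    intro ω; rw [hGA]
    simpa using (hlog1F ω).fun_neg
  have hGBd : ∀ ω, HasDerivAt GB (-(deriv F ω / F ω)) ω := by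
    intro ω; rw [hGB]
    exact (hlogF ω).neg
  have hGAderiv : deriv GA = fun ω => deriv F ω / (1 - F ω) := funext fun ω => (hGAd ω).deriv
  have hGBderiv : deriv GB = fun ω => -(deriv F ω / F ω) := funext fun ω => (hGBd ω).deriv
  have hGAdiff : Differentiable ℝ GA := fun ω => (hGAd ω).differentiableAt
  have hGBdiff : Differentiable ℝ GB := fun ω => (hGBd ω).differentiableAt
  have hGA'diff : Differentiable ℝ (deriv GA) := by
    rw [hGAderiv]; exact hfd.div ((differentiable_const 1).sub hFd) h1Fne
  have hGB'diff : Differentiable ℝ (deriv GB) := by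
    rw [hGBderiv]; exact (hfd.div hFd hFne).neg
  have hApos : ∀ ω, 0 < deriv (deriv GA) ω := by
    intro ω
    have h1 : deriv GA = fun ω => -deriv (fun ω => Real.log (1 - F ω)) ω := by
      rw [hGA]; exact funext fun ω => deriv.neg
    rw [h1, deriv.fun_neg]
    linarith [hlc1F ω]
  have hBpos : ∀ ω, 0 < deriv (deriv GB) ω := by
    intro ω
    have h1 : deriv GB = fun ω => -deriv (fun ω => Real.log (F ω)) ω := by
      rw [hGB]; exact funext fun ω => deriv.neg
    rw [h1, deriv.fun_neg]
    linarith [hlcF ω]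
  -- continuity and sup facts
  have hFc : Continuous F := hF.continuous
  have hfc : Continuous (deriv F) := hfd.continuous
  have hmcont : Continuous (fun ω =>
      max ((deriv F ω) ^ 2 / (F ω) ^ 2) ((deriv F ω) ^ 2 / (1 - F ω) ^ 2)) :=
    Continuous.max
      (((hfc.pow 2).div (hFc.pow 2)) fun ω => pow_ne_zero 2 (hFne ω))
      (((hfc.pow 2).div ((continuous_const.sub hFc).pow 2)) fun ω => pow_ne_zero 2 (h1Fne ω))
  have hbddA : BddAbove ((fun ω =>
      max ((deriv F ω) ^ 2 / (F ω) ^ 2) ((deriv F ω) ^ 2 / (1 - F ω) ^ 2)) ''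
      Set.Icc (-B) (B + J0)) := (isCompact_Icc.image hmcont).bddAbove
  have hle : ∀ ω ∈ Set.Icc (-B) (B + J0),
      max ((deriv F ω) ^ 2 / (F ω) ^ 2) ((deriv F ω) ^ 2 / (1 - F ω) ^ 2) ≤ Cexp :=
    fun ω hω => hCexp ▸ le_csSup hbddA ⟨ω, hω, rfl⟩
  have hbddB : BddBelow ((fun ω => min (deriv (deriv GA) ω) (deriv (deriv GB) ω)) ''
      Set.Icc (-B) (B + J0)) := by
    refine ⟨0, ?_⟩
    rintro b ⟨ω, hω, rfl⟩
    exact le_of_lt (lt_min (hApos ω) (hBpos ω))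
  have key : ∀ θ : EuclideanSpace ℝ (Fin d), v - ⟪x, θ⟫ ∈ Set.Icc (-B) (B + J0) →
      ∀ h : EuclideanSpace ℝ (Fin d),
      (deriv (fun t : ℝ => l (θ + t • h)) 0) ^ 2 ≤ Cexp * ⟪x, h⟫ ^ 2 ∧
      (Cdown / Cexp) * (deriv (fun t : ℝ => l (θ + t • h)) 0) ^ 2 ≤
        deriv (deriv (fun t : ℝ => l (θ + t • h))) 0 := by
    intro θ hθ h
    have hne : (-B) ≤ B + J0 := le_trans hθ.1 hθ.2
    have hCexp_pos : 0 < Cexp :=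
      lt_of_lt_of_le (lt_of_lt_of_le
        (div_pos (pow_pos (hf (-B)) 2) (pow_pos (hFpos (-B)) 2)) (le_max_left _ _))
        (hle (-B) ⟨le_refl _, hne⟩)
    have hCd0 : 0 ≤ Cdown := by
      rw [hCdown]
      refine le_csInf ⟨_, ⟨-B, ⟨le_refl _, hne⟩, rfl⟩⟩ ?_
      rintro b ⟨ω, hω, rfl⟩
      exact le_of_lt (lt_min (hApos ω) (hBpos ω))
    have hCdle : Cdown ≤ min (deriv (deriv GA) (v - ⟪x, θ⟫)) (deriv (deriv GB) (v - ⟪x, θ⟫)) :=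
      hCdown ▸ csInf_le hbddB ⟨v - ⟪x, θ⟫, hθ, rfl⟩
    rcases hind with hi | hi
    · -- ind = 0 : use GB
      have hl' : (fun t : ℝ => l (θ + t • h)) = fun t => GB ((v - ⟪x, θ⟫) - ⟪x, h⟫ * t) := by
        funext t
        have harg : v - ⟪x, θ + t • h⟫ = (v - ⟪x, θ⟫) - ⟪x, h⟫ * t := by
          rw [inner_add_right, real_inner_smul_right]; ring
        simp only [hl, hGB]
        rw [harg, hi]; ring
      have hd1 : deriv (fun t : ℝ => l (θ + t • h)) 0 =
          -⟪x, h⟫ * deriv GB (v - ⟪x, θ⟫) := by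
        rw [hl', comp_deriv_eq GB hGBdiff]
        simp
      have hd2 : deriv (deriv (fun t : ℝ => l (θ + t • h))) 0 =
          ⟪x, h⟫ ^ 2 * deriv (deriv GB) (v - ⟪x, θ⟫) := by
        rw [hl']; exact comp_deriv2 GB hGBdiff hGB'diff _ _
      have hgb : deriv GB (v - ⟪x, θ⟫) = -(deriv F (v - ⟪x, θ⟫) / F (v - ⟪x, θ⟫)) := by
        rw [hGBderiv]
      have hq : (deriv F (v - ⟪x, θ⟫)) ^ 2 / (F (v - ⟪x, θ⟫)) ^ 2 ≤ Cexp :=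
        le_trans (le_max_left _ _) (hle _ hθ)
      have h2 : (-⟪x, h⟫ * -(deriv F (v - ⟪x, θ⟫) / F (v - ⟪x, θ⟫))) ^ 2 =
          ((deriv F (v - ⟪x, θ⟫)) ^ 2 / (F (v - ⟪x, θ⟫)) ^ 2) * ⟪x, h⟫ ^ 2 := by
        rw [(div_pow (deriv F (v - ⟪x, θ⟫)) (F (v - ⟪x, θ⟫)) 2).symm]; ring
      constructor
      · rw [hd1, hgb, h2]
        exact mul_le_mul_of_nonneg_right hq (sq_nonneg _)
      · rw [hd1, hd2, hgb, h2]
        have hu : Cdown ≤ deriv (deriv GB) (v - ⟪x, θ⟫) := le_trans hCdle (min_le_right _ _)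
        rw [div_mul_eq_mul_div, div_le_iff₀ hCexp_pos]
        nlinarith [mul_nonneg (mul_nonneg (sub_nonneg.mpr hq) hCd0) (sq_nonneg (⟪x, h⟫ : ℝ)),
          mul_nonneg (mul_nonneg (sub_nonneg.mpr hu) (le_of_lt hCexp_pos)) (sq_nonneg (⟪x, h⟫ : ℝ))]
    · -- ind = 1 : use GA
      have hl' : (fun t : ℝ => l (θ + t • h)) = fun t => GA ((v - ⟪x, θ⟫) - ⟪x, h⟫ * t) := by
        funext t
        have harg : v - ⟪x, θ + t • h⟫ = (v - ⟪x, θ⟫) - ⟪x, h⟫ * t := by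
          rw [inner_add_right, real_inner_smul_right]; ring
        simp only [hl, hGA]
        rw [harg, hi]; ring
      have hd1 : deriv (fun t : ℝ => l (θ + t • h)) 0 =
          -⟪x, h⟫ * deriv GA (v - ⟪x, θ⟫) := by
        rw [hl', comp_deriv_eq GA hGAdiff]
        simp
      have hd2 : deriv (deriv (fun t : ℝ => l (θ + t • h))) 0 =
          ⟪x, h⟫ ^ 2 * deriv (deriv GA) (v - ⟪x, θ⟫) := by
        rw [hl']; exact comp_deriv2 GA hGAdiff hGA'diff _ _
      have hga : deriv GA (v - ⟪x, θ⟫) = deriv F (v - ⟪x, θ⟫) / (1 - F (v - ⟪x, θ⟫)) := by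
        rw [hGAderiv]
      have hq : (deriv F (v - ⟪x, θ⟫)) ^ 2 / (1 - F (v - ⟪x, θ⟫)) ^ 2 ≤ Cexp :=
        le_trans (le_max_right _ _) (hle _ hθ)
      have h2 : (-⟪x, h⟫ * (deriv F (v - ⟪x, θ⟫) / (1 - F (v - ⟪x, θ⟫)))) ^ 2 =
          ((deriv F (v - ⟪x, θ⟫)) ^ 2 / (1 - F (v - ⟪x, θ⟫)) ^ 2) * ⟪x, h⟫ ^ 2 := by
        rw [(div_pow (deriv F (v - ⟪x, θ⟫)) (1 - F (v - ⟪x, θ⟫)) 2).symm]; ring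
      constructor
      · rw [hd1, hga, h2]
        exact mul_le_mul_of_nonneg_right hq (sq_nonneg _)
      · rw [hd1, hd2, hga, h2]
        have hu : Cdown ≤ deriv (deriv GA) (v - ⟪x, θ⟫) := le_trans hCdle (min_le_left _ _)
        rw [div_mul_eq_mul_div, div_le_iff₀ hCexp_pos]
        nlinarith [mul_nonneg (mul_nonneg (sub_nonneg.mpr hq) hCd0) (sq_nonneg (⟪x, h⟫ : ℝ)),
          mul_nonneg (mul_nonneg (sub_nonneg.mpr hu) (le_of_lt hCexp_pos)) (sq_nonneg (⟪x, h⟫ : ℝ))]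
  exact ⟨fun θ hθ h => (key θ hθ h).1, fun θ hθ h => (key θ hθ h).2⟩
end

section
/- Let Q₀ and Q₁ be two probability distributions on a finite space Y with Q₀(y) > 0 and Q₁(y) > 0 for all y ∈ Y. Then for any function F: Y → {0,1}, Q₀({F = 1}) + Q₁({F = 0}) ≥ (1/2)·exp(−KL(Q₀ ‖ Q₁)). -/
open Finset

/-- For probability distributions `Q₀, Q₁` on a finite space `Y`,
both everywhere positive, and any `F : Y → {0,1}` (as `Bool`),
`Q₀({F = 1}) + Q₁({F = 0}) ≥ (1/2) exp (-KL(Q₀‖Q₁))`. -/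
theorem stmt_8 (Y : Type*) [Fintype Y] (Q₀ Q₁ : Y → ℝ)
    (hQ₀pos : ∀ y, 0 < Q₀ y) (hQ₁pos : ∀ y, 0 < Q₁ y)
    (hQ₀sum : ∑ y, Q₀ y = 1) (hQ₁sum : ∑ y, Q₁ y = 1)
    (F : Y → Bool) :
    (1 / 2) * Real.exp (-(∑ y, Q₀ y * Real.log (Q₀ y / Q₁ y))) ≤
      (∑ y ∈ univ.filter (fun y => F y = true), Q₀ y) +
      (∑ y ∈ univ.filter (fun y => F y = false), Q₁ y) := by
  set m : Y → ℝ := fun y => min (Q₀ y) (Q₁ y) with hm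
  set M : Y → ℝ := fun y => max (Q₀ y) (Q₁ y) with hM
  set A : ℝ := ∑ y, Real.sqrt (Q₀ y * Q₁ y) with hA
  -- rewrite -KL
  have hneg : -(∑ y, Q₀ y * Real.log (Q₀ y / Q₁ y)) =
      ∑ y, Q₀ y * Real.log (Q₁ y / Q₀ y) := by
    rw [← Finset.sum_neg_distrib]
    apply Finset.sum_congr rfl
    intro y _
    rw [Real.log_div (hQ₁pos y).ne' (hQ₀pos y).ne',
        Real.log_div (hQ₀pos y).ne' (hQ₁pos y).ne']
    ring
  -- Step 1 (Jensen): exp(-KL/2) ≤ A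
  have jensen : Real.exp ((∑ y, Q₀ y * Real.log (Q₁ y / Q₀ y)) / 2) ≤ A := by
    have h := convexOn_exp.map_sum_le (t := univ) (w := Q₀)
      (p := fun y => Real.log (Q₁ y / Q₀ y) / 2)
      (fun y _ => (hQ₀pos y).le) hQ₀sum (fun y _ => Set.mem_univ _)
    simp only [smul_eq_mul] at h
    have h1 : (∑ y, Q₀ y * (Real.log (Q₁ y / Q₀ y) / 2)) =
        (∑ y, Q₀ y * Real.log (Q₁ y / Q₀ y)) / 2 := by
      rw [Finset.sum_div]; exact Finset.sum_congr rfl fun y _ => by ring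
    rw [h1] at h
    refine h.trans_eq (Finset.sum_congr rfl fun y _ => ?_)
    have hpos : 0 < Q₁ y / Q₀ y := div_pos (hQ₁pos y) (hQ₀pos y)
    have he : Real.exp (Real.log (Q₁ y / Q₀ y) / 2) = Real.sqrt (Q₁ y / Q₀ y) := by
      rw [Real.sqrt_eq_rpow, Real.rpow_def_of_pos hpos]
      ring_nf
    rw [he, Real.sqrt_div (hQ₁pos y).le, Real.sqrt_mul (hQ₀pos y).le]
    have hs0 : (0:ℝ) < Real.sqrt (Q₀ y) := Real.sqrt_pos.2 (hQ₀pos y)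
    rw [← Real.mul_self_sqrt (hQ₀pos y).le]
    field_simp
    rw [Real.sq_sqrt (sq_nonneg _)]
    ring
  -- Step 2 (Cauchy–Schwarz): A^2 ≤ (∑ m)(∑ M)
  have cs : A ^ 2 ≤ (∑ y, m y) * (∑ y, M y) := by
    have key : ∀ y, Real.sqrt (Q₀ y * Q₁ y) = Real.sqrt (m y) * Real.sqrt (M y) := by
      intro y
      rw [← Real.sqrt_mul (le_min (hQ₀pos y).le (hQ₁pos y).le), min_mul_max]
    have h := Finset.sum_mul_sq_le_sq_mul_sq univ
      (fun y => Real.sqrt (m y)) (fun y => Real.sqrt (M y))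
    simp only [fun y => (Real.sq_sqrt (le_min (hQ₀pos y).le (hQ₁pos y).le) : √(m y) ^ 2 = m y),
      fun y => (Real.sq_sqrt (le_max_of_le_left (hQ₀pos y).le) : √(M y) ^ 2 = M y)] at h
    calc A ^ 2 = (∑ y, Real.sqrt (m y) * Real.sqrt (M y)) ^ 2 := by
          rw [hA]; congr 1; exact Finset.sum_congr rfl fun y _ => key y
      _ ≤ _ := h
  -- Step 3: ∑ M ≤ 2
  have hMle : (∑ y, M y) ≤ 2 := by
    calc (∑ y, M y) ≤ ∑ y, (Q₀ y + Q₁ y) :=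
          Finset.sum_le_sum fun y _ =>
            max_le (le_add_of_nonneg_right (hQ₁pos y).le)
              (le_add_of_nonneg_left (hQ₀pos y).le)
      _ = 2 := by rw [Finset.sum_add_distrib, hQ₀sum, hQ₁sum]; norm_num
  -- Step 4: ∑ m ≤ RHS
  have hmle : (∑ y, m y) ≤
      (∑ y ∈ univ.filter (fun y => F y = true), Q₀ y) +
      (∑ y ∈ univ.filter (fun y => F y = false), Q₁ y) := by
    have hsplit : (∑ y, m y) =
        (∑ y ∈ univ.filter (fun y => F y = true), m y) +
        (∑ y ∈ univ.filter (fun y => ¬ F y = true), m y) :=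
      (Finset.sum_filter_add_sum_filter_not univ _ m).symm
    rw [hsplit]
    have hfe : univ.filter (fun y => ¬ F y = true) = univ.filter (fun y => F y = false) := by
      apply Finset.filter_congr; intro y _; simp
    rw [hfe]
    exact add_le_add
      (Finset.sum_le_sum fun y _ => min_le_left _ _)
      (Finset.sum_le_sum fun y _ => min_le_right _ _)
  -- Combine
  have hmnn : (0:ℝ) ≤ ∑ y, m y :=
    Finset.sum_nonneg fun y _ => le_min (hQ₀pos y).le (hQ₁pos y).le
  have hfinal : Real.exp (∑ y, Q₀ y * Real.log (Q₁ y / Q₀ y)) ≤ 2 * (∑ y, m y) := by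
    calc Real.exp (∑ y, Q₀ y * Real.log (Q₁ y / Q₀ y))
        = Real.exp ((∑ y, Q₀ y * Real.log (Q₁ y / Q₀ y)) / 2) ^ 2 := by
          rw [← Real.exp_nat_mul]; congr 1; push_cast; ring
      _ ≤ A ^ 2 := by
          apply pow_le_pow_left₀ (Real.exp_pos _).le jensen
      _ ≤ (∑ y, m y) * (∑ y, M y) := cs
      _ ≤ (∑ y, m y) * 2 := mul_le_mul_of_nonneg_left hMle hmnn
      _ = 2 * (∑ y, m y) := by ring
  rw [hneg]
  linarith
end

section
/- Let Φ be the standard Gaussian CDF and J₁(u) = argmax_v v·Φ(u−v). Then u* := √(π/2) is the unique fixed point of J₁, and for any σ ∈ (1/2, 1), J_σ(u*) < u*. -/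
noncomputable def gaussPDF (ω : ℝ) : ℝ :=
  (Real.sqrt (2 * Real.pi))⁻¹ * Real.exp (-ω ^ 2 / 2)

noncomputable def gaussCDF (ω : ℝ) : ℝ := ∫ t in Set.Iic ω, gaussPDF t

open Real MeasureTheory Set

namespace St15

noncomputable def c0 : ℝ := (Real.sqrt (2 * Real.pi))⁻¹

lemma sqrt2pi_sq : (Real.sqrt (2*Real.pi))^2 = 2*Real.pi :=
  Real.sq_sqrt (by positivity)

lemma sqrt2pi_pos : 0 < Real.sqrt (2*Real.pi) :=
  Real.sqrt_pos.2 (by positivity)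

lemma c0_pos : 0 < c0 := inv_pos.2 sqrt2pi_pos

lemma sqrt2pi_lb : (5:ℝ)/2 ≤ Real.sqrt (2*Real.pi) := by
  nlinarith [sqrt2pi_sq, sqrt2pi_pos, Real.pi_gt_d6]

lemma sqrt2pi_ub : Real.sqrt (2*Real.pi) ≤ 251/100 := by
  nlinarith [sqrt2pi_sq, sqrt2pi_pos, Real.pi_lt_d2]

lemma c0_le : c0 ≤ 2/5 := by
  rw [c0]
  rw [inv_le_comm₀ (sqrt2pi_pos) (by norm_num)]
  calc ((2:ℝ)/5)⁻¹ = 5/2 := by norm_num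
  _ ≤ _ := sqrt2pi_lb

lemma c0_ge : 39/100 ≤ c0 := by
  rw [c0, le_inv_comm₀ (by norm_num) sqrt2pi_pos]
  calc Real.sqrt (2*Real.pi) ≤ 251/100 := sqrt2pi_ub
  _ ≤ (39/100 : ℝ)⁻¹ := by norm_num

lemma ustar_sq : (Real.sqrt (Real.pi/2))^2 = Real.pi/2 :=
  Real.sq_sqrt (by positivity)

lemma ustar_pos : 0 < Real.sqrt (Real.pi/2) :=
  Real.sqrt_pos.2 (by positivity)

lemma ustar_mul_c0 : Real.sqrt (Real.pi/2) * c0 = 1/2 := by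
  have h1 : (Real.sqrt (Real.pi/2) * c0)^2 = (1/2)^2 := by
    rw [mul_pow, ustar_sq, c0, inv_pow, sqrt2pi_sq]
    have hpi := Real.pi_pos
    field_simp
  have h2 : 0 < Real.sqrt (Real.pi/2) * c0 := mul_pos ustar_pos c0_pos
  nlinarith [h1, h2]

lemma ustar_lb : 5/4 ≤ Real.sqrt (Real.pi/2) := by
  nlinarith [ustar_sq, ustar_pos, Real.pi_gt_d6]

lemma ustar_ub : Real.sqrt (Real.pi/2) ≤ 126/100 := by
  nlinarith [ustar_sq, ustar_pos, Real.pi_lt_d2]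

lemma gaussPDF_eq (t : ℝ) : gaussPDF t = c0 * Real.exp (-(1/2) * t^2) := by
  rw [gaussPDF, c0]; ring_nf

lemma gaussPDF_pos (t : ℝ) : 0 < gaussPDF t := by
  rw [gaussPDF_eq]; have := c0_pos; positivity

lemma gaussPDF_le (t : ℝ) : gaussPDF t ≤ c0 := by
  rw [gaussPDF_eq]
  nlinarith [Real.exp_le_one_iff.2 (by nlinarith [sq_nonneg t] : -(1/2)*t^2 ≤ 0), c0_pos]

lemma integrable_gaussPDF : Integrable gaussPDF := by
  have : Integrable (fun t : ℝ => c0 * Real.exp (-(1/2) * t^2)) :=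
    (integrable_exp_neg_mul_sq (by norm_num : (0:ℝ) < 1/2)).const_mul c0
  exact this.congr (Filter.Eventually.of_forall fun t => (gaussPDF_eq t).symm)

lemma integral_gaussPDF : ∫ t, gaussPDF t = 1 := by
  have h1 : ∫ t : ℝ, gaussPDF t = ∫ t : ℝ, c0 * Real.exp (-(1/2) * t^2) := by
    congr 1; ext t; exact gaussPDF_eq t
  rw [h1, integral_const_mul, integral_gaussian]
  rw [show Real.pi / (1/2) = 2 * Real.pi by ring, c0]
  exact inv_mul_cancel₀ (ne_of_gt sqrt2pi_pos)

lemma gaussPDF_neg (t : ℝ) : gaussPDF (-t) = gaussPDF t := by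
  simp [gaussPDF, neg_sq]

lemma gaussCDF_zero : gaussCDF 0 = 1/2 := by
  have hsym : gaussCDF 0 = ∫ t in Set.Ici (0:ℝ), gaussPDF t := by
    rw [gaussCDF, MeasureTheory.integral_Ici_eq_integral_Ioi,
      show Set.Ioi (0:ℝ) = Set.Ioi (-(0:ℝ)) by norm_num,
      ← integral_comp_neg_Iic]
    simp only [gaussPDF_neg]
  have hIciIoi : ∫ t in Set.Ici (0:ℝ), gaussPDF t = ∫ t in Set.Ioi (0:ℝ), gaussPDF t := by
    rw [MeasureTheory.integral_Ici_eq_integral_Ioi]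
  have htot := intervalIntegral.integral_Iic_add_Ioi (b := (0:ℝ))
    integrable_gaussPDF.integrableOn integrable_gaussPDF.integrableOn
  rw [integral_gaussPDF] at htot
  rw [gaussCDF]
  rw [gaussCDF, hsym, hIciIoi] at *
  linarith [hsym, hIciIoi, htot]

lemma gaussCDF_nonneg (t : ℝ) : 0 ≤ gaussCDF t :=
  MeasureTheory.setIntegral_nonneg measurableSet_Iic (fun x _ => (gaussPDF_pos x).le)

lemma intervalIntegrable_gaussPDF (a b : ℝ) : IntervalIntegrable gaussPDF volume a b :=
  integrable_gaussPDF.intervalIntegrable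

lemma gaussCDF_add (a b : ℝ) :
    gaussCDF b = gaussCDF a + ∫ t in a..b, gaussPDF t := by
  have := intervalIntegral.integral_Iic_sub_Iic (μ := volume) (f := gaussPDF)
    (a := a) (b := b) integrable_gaussPDF.integrableOn integrable_gaussPDF.integrableOn
  rw [gaussCDF, gaussCDF]
  linarith [this]

lemma int_symm (x : ℝ) : ∫ t in (-x)..(0:ℝ), gaussPDF t = ∫ t in (0:ℝ)..x, gaussPDF t := by
  have : ∫ t in (0:ℝ)..x, gaussPDF t = ∫ t in (0:ℝ)..x, gaussPDF (-t) := by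
    congr 1; ext t; rw [gaussPDF_neg]
  rw [this, intervalIntegral.integral_comp_neg]
  norm_num

lemma int_upper {t : ℝ} (ht : 0 ≤ t) : ∫ s in (0:ℝ)..t, gaussPDF s ≤ c0 * t := by
  have h := intervalIntegral.integral_mono_on ht (intervalIntegrable_gaussPDF 0 t)
    (intervalIntegrable_const (c := c0)) (fun s _ => gaussPDF_le s)
  rw [intervalIntegral.integral_const] at h
  simpa [smul_eq_mul, mul_comm] using h

lemma int_lower {t : ℝ} (ht : 0 ≤ t) :
    c0 * (t - t^3/6) ≤ ∫ s in (0:ℝ)..t, gaussPDF s := by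
  have hcont : Continuous (fun s : ℝ => c0 * (1 - s^2/2)) := by continuity
  have h := intervalIntegral.integral_mono_on ht
    (hcont.intervalIntegrable 0 t) (intervalIntegrable_gaussPDF 0 t)
    (fun s _ => ?_)
  · have heval : ∫ s in (0:ℝ)..t, c0 * (1 - s^2/2) = c0 * (t - t^3/6) := by
      rw [intervalIntegral.integral_const_mul]
      have h1 : ∫ s in (0:ℝ)..t, (1 - s^2/2) =
          (∫ s in (0:ℝ)..t, (1:ℝ)) - (1/2) * ∫ s in (0:ℝ)..t, s^2 := by
        rw [← intervalIntegral.integral_const_mul]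
        rw [← intervalIntegral.integral_sub (intervalIntegrable_const)
          ((by continuity : Continuous fun s:ℝ => (1/2)*s^2).intervalIntegrable 0 t)]
        congr 1; ext s; ring
      rw [h1, intervalIntegral.integral_const, integral_pow]
      simp only [smul_eq_mul]
      push_cast; ring
    rw [heval] at h; exact h
  · rw [gaussPDF_eq]
    have := Real.add_one_le_exp (-(1/2) * s^2)
    nlinarith [c0_pos]

lemma gaussCDF_upper_pos {t : ℝ} (ht : 0 ≤ t) : gaussCDF t ≤ 1/2 + c0 * t := by
  rw [gaussCDF_add 0 t, gaussCDF_zero]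
  linarith [int_upper ht]

lemma gaussCDF_lower_pos {t : ℝ} (ht : 0 ≤ t) :
    1/2 + c0 * (t - t^3/6) ≤ gaussCDF t := by
  rw [gaussCDF_add 0 t, gaussCDF_zero]
  linarith [int_lower ht]

lemma gaussCDF_neg_eq (x : ℝ) : gaussCDF (-x) = 1/2 - ∫ s in (0:ℝ)..x, gaussPDF s := by
  have h := gaussCDF_add (-x) 0
  rw [gaussCDF_zero, int_symm] at h
  linarith

lemma gaussCDF_upper_neg {x : ℝ} (hx : 0 ≤ x) :
    gaussCDF (-x) ≤ 1/2 - c0 * (x - x^3/6) := by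
  rw [gaussCDF_neg_eq]; linarith [int_lower hx]

lemma gaussCDF_lower_neg {x : ℝ} (hx : 0 ≤ x) :
    1/2 - c0 * x ≤ gaussCDF (-x) := by
  rw [gaussCDF_neg_eq]; linarith [int_upper hx]

lemma gaussCDF_pos (t : ℝ) : 0 < gaussCDF t := by
  rw [gaussCDF_add (t-1) t]
  have h2 : 0 < ∫ s in (t-1)..t, gaussPDF s :=
    intervalIntegral.intervalIntegral_pos_of_pos (intervalIntegrable_gaussPDF _ _)
      gaussPDF_pos (by linarith)
  linarith [gaussCDF_nonneg (t-1)]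

lemma mills {x : ℝ} (hx : 0 < x) :
    gaussCDF (-x) ≤ c0 * Real.exp (-x^2/2) / x := by
  have hF : ∀ t : ℝ, HasDerivAt (fun t : ℝ => (c0/x) * Real.exp (-(1/2)*t^2))
      ((-t/x) * gaussPDF t) t := by
    intro t
    have h1 : HasDerivAt (fun t : ℝ => -(1/2)*t^2) (-t) t := by
      have := ((hasDerivAt_pow 2 t).const_mul (-(1/2):ℝ))
      exact this.congr_deriv (by push_cast; ring)
    have h2 := (h1.exp).const_mul (c0/x)
    refine h2.congr_deriv ?_
    rw [gaussPDF_eq]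
    ring
  have hint : IntegrableOn (fun t : ℝ => (-t/x) * gaussPDF t) (Set.Iic (-x)) := by
    have h : Integrable (fun t : ℝ => (-(1/x) * c0) * (t * Real.exp (-(1/2)*t^2))) :=
      ((integrable_mul_exp_neg_mul_sq (by norm_num : (0:ℝ) < 1/2)).const_mul _)
    refine (h.congr (Filter.Eventually.of_forall fun t => ?_)).integrableOn
    rw [gaussPDF_eq]; ring
  have htend : Filter.Tendsto (fun t : ℝ => (c0/x) * Real.exp (-(1/2)*t^2))
      Filter.atBot (nhds 0) := by
    rw [show (0:ℝ) = (c0/x) * 0 by ring]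
    apply Filter.Tendsto.const_mul
    apply Real.tendsto_exp_atBot.comp
    apply Filter.tendsto_atBot_atBot.2
    intro b
    refine ⟨-(Real.sqrt (2*|b|) + 1), fun a ha => ?_⟩
    have h1 : Real.sqrt (2*|b|) + 1 ≤ -a := by linarith
    have h2 : (Real.sqrt (2*|b|))^2 = 2*|b| := Real.sq_sqrt (by positivity)
    have h3 : 0 ≤ Real.sqrt (2*|b|) := Real.sqrt_nonneg _
    nlinarith [abs_nonneg b, le_abs_self b, neg_abs_le b, sq_nonneg a]
  have heq := MeasureTheory.integral_Iic_of_hasDerivAt_of_tendsto'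
    (a := -x) (f := fun t : ℝ => (c0/x) * Real.exp (-(1/2)*t^2))
    (f' := fun t => (-t/x) * gaussPDF t) (fun t _ => hF t) hint htend
  have hle : gaussCDF (-x) ≤ ∫ t in Set.Iic (-x), (-t/x) * gaussPDF t := by
    rw [gaussCDF]
    apply MeasureTheory.setIntegral_mono_on integrable_gaussPDF.integrableOn hint
      measurableSet_Iic
    intro t ht
    have htx : t ≤ -x := ht
    have h1 : 1 ≤ -t/x := by
      rw [le_div_iff₀ hx]; linarith
    nlinarith [gaussPDF_pos t]
  rw [heq, sub_zero] at hle
  calc gaussCDF (-x) ≤ (c0/x) * Real.exp (-(1/2)*(-x)^2) := hle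
  _ = c0 * Real.exp (-x^2/2) / x := by rw [neg_sq]; ring_nf

lemma ustar_facts : ∃ u : ℝ, u = Real.sqrt (Real.pi/2) ∧ u * c0 = 1/2 ∧
    5/4 ≤ u ∧ u ≤ 126/100 :=
  ⟨_, rfl, ustar_mul_c0, ustar_lb, ustar_ub⟩

set_option maxHeartbeats 1000000 in
lemma key_upper {σ x : ℝ} (hσ : 1/2 < σ) (hσ1 : σ ≤ 1) (hx : 0 < x) :
    (Real.sqrt (Real.pi/2) + σ*x) * gaussCDF (-x) < Real.sqrt (Real.pi/2) / 2 := by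
  obtain ⟨u, hueq, huc, hul, huu⟩ := ustar_facts
  rw [← hueq]
  have hc1 := c0_le; have hc2 := c0_ge; have hc0 := c0_pos
  have hw : 0 ≤ u + σ*x := by nlinarith
  rcases le_or_gt x (7/5) with hx14 | hx14
  · have hΦ := gaussCDF_upper_neg hx.le
    have hx2 : x^2 ≤ 49/25 := by nlinarith
    have hsc : 39/200 < σ*c0 := by nlinarith
    have hbr : x/12 + σ*c0*x^2/6 < σ*c0 := by nlinarith
    calc (u + σ*x) * gaussCDF (-x) ≤ (u + σ*x) * (1/2 - c0*(x - x^3/6)) :=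
          mul_le_mul_of_nonneg_left hΦ hw
    _ < u/2 := by nlinarith [mul_pos hx hx, mul_pos (mul_pos hx hx) hx]
  · obtain ⟨E, hEdef⟩ : ∃ E : ℝ, E = Real.exp (-x^2/2) := ⟨_, rfl⟩
    have hΦ : gaussCDF (-x) ≤ c0 * E / x := by rw [hEdef]; exact mills hx
    have hEpos : 0 < E := by rw [hEdef]; exact Real.exp_pos _
    have hEq : E * (1 + x^2/4)^2 ≤ 1 := by
      have h1 : (1 + x^2/4)^2 ≤ Real.exp (x^2/2) := by
        rw [show x^2/2 = x^2/4 + x^2/4 by ring, Real.exp_add]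
        nlinarith [Real.add_one_le_exp (x^2/4), sq_nonneg x, Real.exp_pos (x^2/4)]
      have h2 : E * Real.exp (x^2/2) = 1 := by
        rw [hEdef, ← Real.exp_add, show -x^2/2 + x^2/2 = 0 by ring, Real.exp_zero]
      nlinarith
    have hq : (0:ℝ) < x * (1 + x^2/4)^2 := by positivity
    have step1 : (u + σ*x) * gaussCDF (-x) ≤ (u + σ*x) * (c0 * E / x) :=
      mul_le_mul_of_nonneg_left hΦ hw
    have step2 : (u + σ*x) * (c0 * E / x) * (x * (1 + x^2/4)^2)
        < u/2 * (x * (1 + x^2/4)^2) := by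
      have hxne : x ≠ 0 := ne_of_gt hx
      have e1 : (u + σ*x) * (c0 * E / x) * (x * (1 + x^2/4)^2)
          = (c0 * (u + σ*x)) * (E * (1 + x^2/4)^2) := by
        field_simp
      rw [e1]
      clear step1 hΦ hEdef e1 hq
      have e2 : (c0 * (u + σ*x)) * (E * (1 + x^2/4)^2) ≤ (c0 * (u + σ*x)) * 1 :=
        mul_le_mul_of_nonneg_left hEq (mul_nonneg hc0.le hw)
      rw [mul_one] at e2
      have hb : 1 + x^2/2 ≤ (1 + x^2/4)^2 := by nlinarith [sq_nonneg (x^2)]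
      have e3 : c0 * (u + σ*x) < u/2 * (x * (1 + x^2/2)) := by
        nlinarith [mul_pos (mul_pos hx hx) hx]
      have i1 : x*(1 + x^2/2) ≤ x*(1 + x^2/4)^2 :=
        mul_le_mul_of_nonneg_left hb hx.le
      have e4 : u/2 * (x * (1 + x^2/2)) ≤ u/2 * (x * (1 + x^2/4)^2) :=
        mul_le_mul_of_nonneg_left i1 (by linarith : (0:ℝ) ≤ u/2)
      linarith
    have h5 : (u + σ*x) * (c0 * E / x) < u/2 := by
      by_contra hcon
      push_neg at hcon
      exact absurd step2 (not_lt.2 (mul_le_mul_of_nonneg_right hcon hq.le))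
    linarith

lemma all_le_one (w : ℝ) :
    w * gaussCDF (Real.sqrt (Real.pi/2) - w) ≤ Real.sqrt (Real.pi/2) / 2 := by
  obtain ⟨u, hueq, huc, hul, huu⟩ := ustar_facts
  rw [← hueq]
  have hc1 := c0_le; have hc2 := c0_ge; have hc0 := c0_pos
  rcases le_or_gt w 0 with hw0 | hw0
  · have h1 : 0 ≤ gaussCDF (u - w) := gaussCDF_nonneg _
    nlinarith
  rcases le_or_gt w u with hwu | hwu
  · have ht0 : 0 ≤ u - w := by linarith
    have hΦ := gaussCDF_upper_pos ht0
    have h1 : w * gaussCDF (u - w) ≤ w * (1/2 + c0*(u - w)) :=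
      mul_le_mul_of_nonneg_left hΦ hw0.le
    have hkey : 0 ≤ (u - w) * (1/2 - c0*w) :=
      mul_nonneg ht0 (by nlinarith [mul_le_mul_of_nonneg_left hwu hc0.le])
    nlinarith [h1, hkey]
  · have hx : 0 < w - u := by linarith
    have h := key_upper (σ := 1) (x := w - u) (by norm_num) le_rfl hx
    rw [← hueq] at h
    have e1 : u + 1*(w-u) = w := by ring
    have e2 : -(w-u) = u - w := by ring
    rw [e1, e2] at h
    exact h.le

lemma exists_gt_sigma {σ : ℝ} (hσ : 1/2 < σ) (hσ1 : σ < 1) :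
    ∃ w : ℝ, Real.sqrt (Real.pi/2) / 2
      < w * gaussCDF ((Real.sqrt (Real.pi/2) - w)/σ) := by
  obtain ⟨u, hueq, huc, hul, huu⟩ := ustar_facts
  rw [← hueq]
  have hc1 := c0_le; have hc2 := c0_ge; have hc0 := c0_pos
  obtain ⟨t, htdef⟩ : ∃ t : ℝ, t = (1 - σ)/2 := ⟨_, rfl⟩
  have ht0 : 0 < t := by rw [htdef]; linarith
  have ht4 : t ≤ 1/4 := by rw [htdef]; linarith
  refine ⟨u - σ*t, ?_⟩
  have hσ0 : σ ≠ 0 := by intro h; rw [h] at hσ; norm_num at hσ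
  have harg : (u - (u - σ*t))/σ = t := by field_simp; ring
  rw [harg]
  have hΦ := gaussCDF_lower_pos ht0.le
  have hwpos : 0 < u - σ*t := by nlinarith
  have h1 : (u - σ*t) * (1/2 + c0*(t - t^3/6)) ≤ (u - σ*t) * gaussCDF t :=
    mul_le_mul_of_nonneg_left hΦ hwpos.le
  have h2 : u/2 < (u - σ*t) * (1/2 + c0*(t - t^3/6)) := by
    have hσt : σ = 1 - 2*t := by rw [htdef]; ring
    rw [hσt]
    have e1 : (u - (1-2*t)*t) * (1/2 + c0*(t - t^3/6)) - u/2
        = (u*c0)*(t - t^3/6) - (1-2*t)*t/2 - (1-2*t)*c0*t^2 + (1-2*t)*c0*t^4/6 := by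
      ring
    rw [huc] at e1
    have hpos : 0 < (1/2)*(t - t^3/6) - (1-2*t)*t/2 - (1-2*t)*c0*t^2
        + (1-2*t)*c0*t^4/6 := by
      nlinarith [mul_pos ht0 ht0, mul_pos (mul_pos ht0 ht0) ht0,
        mul_pos (mul_pos (mul_pos ht0 ht0) ht0) ht0,
        mul_pos (mul_pos hc0 ht0) ht0,
        mul_pos (mul_pos (mul_pos hc0 ht0) ht0) ht0,
        mul_pos (mul_pos (mul_pos (mul_pos hc0 ht0) ht0) ht0) ht0]
    linarith
  linarith

lemma exists_gt_one {v : ℝ} (hv : v ≠ Real.sqrt (Real.pi/2)) :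
    ∃ w : ℝ, v/2 < w * gaussCDF (v - w) := by
  obtain ⟨u, hueq, huc, hul, huu⟩ := ustar_facts
  rw [← hueq] at hv
  have hc1 := c0_le; have hc2 := c0_ge; have hc0 := c0_pos
  rcases le_or_gt v 0 with hv0 | hv0
  · exact ⟨1, by nlinarith [gaussCDF_pos (v - 1)]⟩
  rcases lt_or_gt_of_ne hv with hvu | hvu
  · obtain ⟨δ, hδdef⟩ : ∃ δ : ℝ, δ = 1/2 - v*c0 := ⟨_, rfl⟩
    have hδ : 0 < δ := by
      rw [hδdef]; nlinarith [mul_lt_mul_of_pos_right hvu hc0]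
    have hδ2 : δ < 1/2 := by rw [hδdef]; nlinarith
    refine ⟨v + δ, ?_⟩
    rw [show v - (v + δ) = -δ by ring]
    have hΦ := gaussCDF_lower_neg hδ.le
    have h1 : (v + δ) * (1/2 - c0*δ) ≤ (v + δ) * gaussCDF (-δ) :=
      mul_le_mul_of_nonneg_left hΦ (by linarith)
    have h2 : v/2 < (v + δ) * (1/2 - c0*δ) := by nlinarith [mul_pos hδ hδ]
    linarith
  · obtain ⟨δ, hδdef⟩ : ∃ δ : ℝ, δ = v*c0 - 1/2 := ⟨_, rfl⟩
    have hδ : 0 < δ := by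
      rw [hδdef]; nlinarith [mul_lt_mul_of_pos_right hvu hc0]
    obtain ⟨t, htdef⟩ : ∃ t : ℝ, t = min 1 δ := ⟨_, rfl⟩
    have ht0 : 0 < t := by rw [htdef]; exact lt_min one_pos hδ
    have ht1 : t ≤ 1 := by rw [htdef]; exact min_le_left _ _
    have htδ : t ≤ δ := by rw [htdef]; exact min_le_right _ _
    refine ⟨v - t, ?_⟩
    rw [show v - (v - t) = t by ring]
    have hΦ := gaussCDF_lower_pos ht0.le
    have hwpos : 0 < v - t := by nlinarith
    have h1 : (v - t) * (1/2 + c0*(t - t^3/6)) ≤ (v - t) * gaussCDF t :=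
      mul_le_mul_of_nonneg_left hΦ hwpos.le
    have h2 : v/2 < (v - t) * (1/2 + c0*(t - t^3/6)) := by
      rcases le_total 1 δ with h1δ | h1δ
      · have hteq : t = 1 := by rw [htdef, min_eq_left h1δ]
        rw [hteq]
        nlinarith
      · have hteq : t = δ := by rw [htdef, min_eq_right h1δ]
        rw [hteq]
        nlinarith [mul_pos hδ hδ, mul_pos (mul_pos hδ hδ) hδ,
          mul_pos (mul_pos (mul_pos hδ hδ) hδ) hδ]
    linarith

end St15

/-- With `J σ u` the unique maximizer of `v ↦ v Φ((u - v)/σ)`,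
`u* = √(π/2)` is the unique fixed point of `J 1`, and for any
`σ ∈ (1/2, 1)`, `J σ u* < u*`. -/
theorem stmt_15 (J : ℝ → ℝ → ℝ)
    (hJmax : ∀ σ : ℝ, 0 < σ → ∀ u v : ℝ,
      v * gaussCDF ((u - v) / σ) ≤ J σ u * gaussCDF ((u - J σ u) / σ))
    (hJuniq : ∀ σ : ℝ, 0 < σ → ∀ u v : ℝ,
      (∀ w : ℝ, w * gaussCDF ((u - w) / σ) ≤ v * gaussCDF ((u - v) / σ)) →
        v = J σ u) :
    (∀ u : ℝ, J 1 u = u ↔ u = Real.sqrt (Real.pi / 2)) ∧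
      ∀ σ ∈ Set.Ioo (1 / 2 : ℝ) 1,
        J σ (Real.sqrt (Real.pi / 2)) < Real.sqrt (Real.pi / 2) := by
  constructor
  · intro u
    constructor
    · intro hfix
      by_contra hne
      obtain ⟨w, hw⟩ := St15.exists_gt_one hne
      have h := hJmax 1 one_pos u w
      rw [hfix] at h
      simp only [div_one, sub_self] at h
      rw [St15.gaussCDF_zero] at h
      linarith
    · rintro rfl
      refine (hJuniq 1 one_pos _ _ ?_).symm
      intro w
      simp only [div_one, sub_self]
      rw [St15.gaussCDF_zero]
      have := St15.all_le_one w
      linarith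
  · intro σ hσ
    obtain ⟨hσl, hσr⟩ := hσ
    have hσ0 : (0:ℝ) < σ := by linarith
    by_contra hcon
    push_neg at hcon
    obtain ⟨w, hw⟩ := St15.exists_gt_sigma hσl hσr
    have hmax := hJmax σ hσ0 (Real.sqrt (Real.pi / 2)) w
    rcases eq_or_lt_of_le hcon with heq | hlt
    · rw [← heq] at hmax
      simp only [sub_self, zero_div] at hmax
      rw [St15.gaussCDF_zero] at hmax
      have hu := St15.ustar_pos
      linarith
    · have hx : 0 < (J σ (Real.sqrt (Real.pi / 2)) - Real.sqrt (Real.pi / 2))/σ :=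
        div_pos (by linarith) hσ0
      have hk := St15.key_upper hσl hσr.le hx
      have e : Real.sqrt (Real.pi/2)
          + σ*((J σ (Real.sqrt (Real.pi / 2)) - Real.sqrt (Real.pi / 2))/σ)
          = J σ (Real.sqrt (Real.pi / 2)) := by
        rw [mul_comm, div_mul_cancel₀ _ (ne_of_gt hσ0)]
        ring
      have e2 : -((J σ (Real.sqrt (Real.pi / 2)) - Real.sqrt (Real.pi / 2))/σ)
          = (Real.sqrt (Real.pi / 2) - J σ (Real.sqrt (Real.pi / 2)))/σ := by
        ring
      rw [e, e2] at hk
      linarith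
end

section
/- Let u* = √(π/2), σ ∈ (1/2,1), v ∈ (0, u*), and define r(v,σ) = v·Φ((u*−v)/σ) with Φ the standard Gaussian CDF, and let v*(σ) be the maximizer of r(·,σ). Then r(v*(σ),σ) − r(v,σ) ≥ (1/60)·(v*(σ) − v)². -/
open MeasureTheory Set Real

lemma gaussPDF_eq (x : ℝ) : gaussPDF x = (Real.sqrt (2 * Real.pi))⁻¹ * Real.exp (-(1/2) * x ^ 2) := by
  unfold gaussPDF; ring_nf

lemma gaussPDF_pos (x : ℝ) : 0 < gaussPDF x := by
  unfold gaussPDF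
  positivity

lemma sqrt_two_pi_pos : 0 < Real.sqrt (2 * Real.pi) := by positivity

lemma continuous_gaussPDF : Continuous gaussPDF := by
  unfold gaussPDF; continuity

lemma integrable_gaussPDF : Integrable gaussPDF := by
  have := (integrable_exp_neg_mul_sq (by norm_num : (0:ℝ) < 1/2)).const_mul (Real.sqrt (2 * Real.pi))⁻¹
  refine this.congr (Filter.Eventually.of_forall fun x => ?_)
  rw [gaussPDF_eq]

lemma integral_gaussPDF : ∫ x, gaussPDF x = 1 := by
  simp_rw [gaussPDF_eq]
  rw [MeasureTheory.integral_const_mul, integral_gaussian]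
  rw [div_div_eq_mul_div, div_one]
  rw [mul_comm Real.pi 2, inv_mul_cancel₀ (ne_of_gt sqrt_two_pi_pos)]

lemma hasDerivAt_gaussCDF (x : ℝ) : HasDerivAt gaussCDF (gaussPDF x) x := by
  have h : ∀ y, gaussCDF y = gaussCDF 0 + ∫ t in (0:ℝ)..y, gaussPDF t := by
    intro y
    have := intervalIntegral.integral_Iic_sub_Iic (f := gaussPDF) (μ := volume)
      integrable_gaussPDF.integrableOn integrable_gaussPDF.integrableOn (a := 0) (b := y)
    unfold gaussCDF
    linarith [this]
  rw [funext h]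
  have := intervalIntegral.integral_hasDerivAt_right
    (integrable_gaussPDF.intervalIntegrable (a := 0) (b := x))
    (continuous_gaussPDF.stronglyMeasurable.stronglyMeasurableAtFilter)
    continuous_gaussPDF.continuousAt
  simpa using this.const_add (gaussCDF 0)

lemma gaussCDF_pos (x : ℝ) : 0 < gaussCDF x := by
  unfold gaussCDF
  rw [setIntegral_pos_iff_support_of_nonneg_ae
    (Filter.Eventually.of_forall fun t => (gaussPDF_pos t).le)
    integrable_gaussPDF.integrableOn]
  have : Function.support gaussPDF = Set.univ := by
    ext t; simp [Function.mem_support, (gaussPDF_pos t).ne']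
  rw [this, Set.univ_inter]
  simp [Real.volume_Iic]

lemma gaussCDF_le_one (x : ℝ) : gaussCDF x ≤ 1 := by
  rw [← integral_gaussPDF]
  exact setIntegral_le_integral integrable_gaussPDF
    (Filter.Eventually.of_forall fun t => (gaussPDF_pos t).le)

lemma gaussCDF_zero : gaussCDF 0 = 1 / 2 := by
  have h1 : gaussCDF 0 + ∫ t in Set.Ioi (0:ℝ), gaussPDF t = 1 := by
    rw [← integral_gaussPDF]
    unfold gaussCDF
    rw [← MeasureTheory.setIntegral_union (Set.Iic_disjoint_Ioi le_rfl)
      measurableSet_Ioi integrable_gaussPDF.integrableOn integrable_gaussPDF.integrableOn,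
      Set.Iic_union_Ioi, MeasureTheory.setIntegral_univ]
  have h2 : (∫ t in Set.Ioi (0:ℝ), gaussPDF t) = gaussCDF 0 := by
    have : (∫ t in Set.Ioi (0:ℝ), gaussPDF (-t)) = ∫ t in Set.Iic (-(0:ℝ)), gaussPDF t :=
      integral_comp_neg_Ioi 0 gaussPDF
    have heq : ∀ t : ℝ, gaussPDF (-t) = gaussPDF t := by
      intro t; unfold gaussPDF; ring_nf
    simp_rw [heq] at this
    simpa [gaussCDF] using this
  rw [h2] at h1; linarith

lemma hasDerivAt_gaussPDF (x : ℝ) : HasDerivAt gaussPDF (-x * gaussPDF x) x := by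
  have h : HasDerivAt (fun t : ℝ => -t ^ 2 / 2) (-x) x := by
    have := ((hasDerivAt_pow 2 x).neg).div_const 2
    simpa using this.congr_deriv (by ring)
  have := (h.exp).const_mul (Real.sqrt (2 * Real.pi))⁻¹
  unfold gaussPDF
  convert this using 1
  · rfl
  · rfl
  ring

lemma integrable_mul_gaussPDF : Integrable (fun t : ℝ => -t * gaussPDF t) := by
  have h := (integrable_mul_exp_neg_mul_sq (by norm_num : (0:ℝ) < 1/2)).const_mul
    (-(Real.sqrt (2 * Real.pi))⁻¹)
  refine h.congr (Filter.Eventually.of_forall fun t => ?_)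
  show _ = -t * gaussPDF t
  rw [gaussPDF_eq]; ring

lemma tendsto_gaussPDF_atBot : Filter.Tendsto gaussPDF Filter.atBot (nhds 0) := by
  have hsq : Filter.Tendsto (fun t : ℝ => t ^ 2) Filter.atBot Filter.atTop := by
    have ha : Filter.Tendsto (fun t : ℝ => -t) Filter.atBot Filter.atTop :=
      Filter.tendsto_neg_atBot_atTop
    have hb : Filter.Tendsto (fun s : ℝ => s ^ 2) Filter.atTop Filter.atTop :=
      Filter.tendsto_pow_atTop two_ne_zero
    exact (hb.comp ha).congr fun t => by simp [Function.comp]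
  have h1 : Filter.Tendsto (fun t : ℝ => -t ^ 2 / 2) Filter.atBot Filter.atBot := by
    have hc : Filter.Tendsto (fun t : ℝ => -t ^ 2) Filter.atBot Filter.atBot :=
      (Filter.tendsto_neg_atTop_atBot.comp hsq).congr fun t => rfl
    exact hc.atBot_div_const (by norm_num)
  have h3 := (Real.tendsto_exp_atBot.comp h1).const_mul (Real.sqrt (2 * Real.pi))⁻¹
  rw [mul_zero] at h3
  refine h3.congr fun t => ?_
  simp [gaussPDF, Function.comp]

lemma integral_Iic_mul_gaussPDF (x : ℝ) :
    (∫ t in Set.Iic x, -t * gaussPDF t) = gaussPDF x := by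
  have := MeasureTheory.integral_Iic_of_hasDerivAt_of_tendsto
    (f := gaussPDF) (f' := fun t => -t * gaussPDF t) (a := x) (m := 0)
    (continuous_gaussPDF.continuousWithinAt)
    (fun t _ => hasDerivAt_gaussPDF t)
    integrable_mul_gaussPDF.integrableOn
    tendsto_gaussPDF_atBot
  rw [this]; ring

lemma gaussCDF_mills {x : ℝ} (hx : x < 0) : (-x) * gaussCDF x ≤ gaussPDF x := by
  rw [← integral_Iic_mul_gaussPDF x]
  unfold gaussCDF
  rw [← MeasureTheory.integral_const_mul]
  refine MeasureTheory.setIntegral_mono_on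
    (integrable_gaussPDF.integrableOn.const_mul _)
    integrable_mul_gaussPDF.integrableOn
    measurableSet_Iic (fun t ht => ?_)
  have h : -x ≤ -t := by simp at ht; linarith
  exact mul_le_mul_of_nonneg_right h (gaussPDF_pos t).le

lemma gaussPDF_anti {x t : ℝ} (h1 : x ≤ t) (h2 : t ≤ 0) : gaussPDF x ≤ gaussPDF t := by
  unfold gaussPDF
  refine mul_le_mul_of_nonneg_left (Real.exp_le_exp.2 ?_) (by positivity)
  nlinarith

lemma gaussCDF_upper {x : ℝ} (hx : x ≤ 0) : gaussCDF x ≤ 1 / 2 + x * gaussPDF x := by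
  have key : (0 - x) * gaussPDF x ≤ ∫ t in x..0, gaussPDF t := by
    have hc := intervalIntegral.integral_const (a := x) (b := 0) (gaussPDF x)
    rw [smul_eq_mul] at hc
    rw [← hc]
    refine intervalIntegral.integral_mono_on hx
      (intervalIntegrable_const) (integrable_gaussPDF.intervalIntegrable) (fun t ht => ?_)
    exact gaussPDF_anti ht.1 ht.2
  have h2 : (∫ t in x..0, gaussPDF t) = gaussCDF 0 - gaussCDF x := by
    have := intervalIntegral.integral_Iic_sub_Iic (f := gaussPDF) (μ := volume)
      integrable_gaussPDF.integrableOn integrable_gaussPDF.integrableOn (a := x) (b := 0)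
    unfold gaussCDF; linarith
  rw [h2, gaussCDF_zero] at key
  linarith

noncomputable def uc : ℝ := Real.sqrt (Real.pi / 2)

noncomputable def rf (σ w : ℝ) : ℝ := w * gaussCDF ((uc - w) / σ)
noncomputable def rf' (σ w : ℝ) : ℝ :=
  gaussCDF ((uc - w) / σ) - w / σ * gaussPDF ((uc - w) / σ)
noncomputable def rf'' (σ w : ℝ) : ℝ :=
  -gaussPDF ((uc - w) / σ) * (2 / σ + w * ((uc - w) / σ) / σ ^ 2)

lemma uc_pos : 0 < uc := Real.sqrt_pos.2 (by positivity)

lemma uc_sq : uc ^ 2 = Real.pi / 2 := Real.sq_sqrt (by positivity)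

lemma sqrt_two_pi_eq : Real.sqrt (2 * Real.pi) = 2 * uc := by
  rw [show (2:ℝ) * Real.pi = 2 ^ 2 * (Real.pi / 2) by ring,
    Real.sqrt_mul (by norm_num), Real.sqrt_sq (by norm_num)]
  rfl

lemma uc_lt : uc < 1.2534 := by
  nlinarith [uc_sq, uc_pos, Real.pi_lt_d6]

lemma gaussPDF_eq_uc (x : ℝ) : gaussPDF x = (2 * uc)⁻¹ * Real.exp (-x ^ 2 / 2) := by
  rw [gaussPDF, sqrt_two_pi_eq]

lemma exp_pi_lt : Real.exp Real.pi < 23.4 := by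
  have h1 : Real.exp Real.pi ≤ Real.exp 3.1416 :=
    Real.exp_le_exp.2 (le_of_lt (lt_trans Real.pi_lt_d6 (by norm_num)))
  have h2 : Real.exp (3.1416:ℝ) = Real.exp 1 ^ 3 * Real.exp 0.1416 := by
    rw [← Real.exp_nat_mul, ← Real.exp_add]; norm_num
  have h3 : Real.exp (0.1416:ℝ) ≤ 1 / 0.8584 := by
    have h4 := Real.add_one_le_exp (-0.1416 : ℝ)
    have h5 : Real.exp (-0.1416:ℝ) = (Real.exp 0.1416)⁻¹ := by
      rw [← Real.exp_neg]
    rw [h5] at h4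
    have h6 := Real.exp_pos (0.1416:ℝ)
    have h7 := mul_inv_cancel₀ (ne_of_gt h6)
    rw [le_div_iff₀ (by norm_num : (0:ℝ) < 0.8584)]
    nlinarith
  have h7 := Real.exp_one_lt_d9
  have h8 := Real.exp_pos (1:ℝ)
  have hE3 : Real.exp 1 ^ 3 ≤ (2.7182818286:ℝ) ^ 3 := by
    exact pow_le_pow_left₀ h8.le h7.le 3
  have h9 : Real.exp (3.1416:ℝ) ≤ (2.7182818286:ℝ) ^ 3 * (1 / 0.8584) := by
    rw [h2]
    exact mul_le_mul hE3 h3 (Real.exp_pos _).le (by positivity)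
  have : ((2.7182818286:ℝ) ^ 3 * (1 / 0.8584)) < 23.4 := by norm_num
  linarith

lemma hasDerivAt_inner {σ : ℝ} (hσ : σ ≠ 0) (w : ℝ) :
    HasDerivAt (fun u => (uc - u) / σ) (-(1 / σ)) w := by
  have h := ((hasDerivAt_id w).const_sub uc).div_const σ
  convert h using 1
  · rfl
  · rfl
  · rfl
  ring

lemma hasDerivAt_rf {σ : ℝ} (hσ : σ ≠ 0) (w : ℝ) :
    HasDerivAt (rf σ) (rf' σ w) w := by
  have hin := hasDerivAt_inner hσ w
  have hΦ := (hasDerivAt_gaussCDF ((uc - w) / σ)).comp w hin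
  have := (hasDerivAt_id w).mul hΦ
  unfold rf rf'
  convert this using 1
  · rfl
  · rfl
  · rfl
  simp only [Function.comp_apply, id]
  field_simp
  ring

lemma hasDerivAt_rf' {σ : ℝ} (hσ : σ ≠ 0) (w : ℝ) :
    HasDerivAt (rf' σ) (rf'' σ w) w := by
  have hin := hasDerivAt_inner hσ w
  have hΦ := (hasDerivAt_gaussCDF ((uc - w) / σ)).comp w hin
  have hp := (hasDerivAt_gaussPDF ((uc - w) / σ)).comp w hin
  have h2 := ((hasDerivAt_id w).div_const σ).mul hp
  have := hΦ.sub h2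
  unfold rf' rf''
  convert this using 1
  · rfl
  · rfl
  · rfl
  simp only [Function.comp_apply, id]
  field_simp
  ring

lemma rf'_tail_neg {σ : ℝ} (hσ : σ ∈ Set.Ioo (1/2 : ℝ) 1) {w : ℝ} (hw : uc ≤ w) :
    rf' σ w < 0 := by
  obtain ⟨hσ1, hσ2⟩ := hσ
  have hσ0 : 0 < σ := by linarith
  obtain ⟨t, ht0, rfl⟩ : ∃ t, 0 ≤ t ∧ w = t + uc := ⟨w - uc, by linarith, by ring⟩
  have huc := uc_pos
  set x : ℝ := (uc - (t + uc)) / σ with hxdef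
  have hxt : x = -t / σ := by rw [hxdef]; ring
  have hx0 : x ≤ 0 := by
    rw [hxt]; apply div_nonpos_of_nonpos_of_nonneg <;> linarith
  have hp := gaussPDF_pos x
  unfold rf'
  rw [← hxdef, sub_neg]
  rcases lt_or_ge (σ ^ 2) (t * (t + uc)) with h1 | h2
  · -- Mills regime
    have htpos : 0 < t := by
      rcases ht0.eq_or_lt with h | h
      · exfalso; rw [← h] at h1; simp at h1; nlinarith
      · exact h
    have hxneg : x < 0 := by rw [hxt]; exact div_neg_of_neg_of_pos (by linarith) hσ0
    have hm := gaussCDF_mills hxneg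
    have hnx : -x = t / σ := by rw [hxt]; ring
    rw [hnx] at hm
    have h3 : t * gaussCDF x ≤ σ * gaussPDF x := by
      have := mul_le_mul_of_nonneg_right hm hσ0.le
      rw [div_mul_eq_mul_div, div_mul_cancel₀] at this
      · linarith [this]
      · exact hσ0.ne'
    rw [div_mul_eq_mul_div, lt_div_iff₀ hσ0]
    -- goal : gaussCDF x * σ < (t + uc) * gaussPDF x
    nlinarith [mul_le_mul_of_nonneg_left h3 hσ0.le,
      mul_lt_mul_of_pos_right h1 hp, mul_pos hσ0 (gaussCDF_pos x), htpos]
  · -- near regime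
    have hΦ := gaussCDF_upper hx0
    have hD : (0:ℝ) < t + 2 * uc := by linarith
    have hT : (0:ℝ) < 2 * (t + uc) := by linarith
    have hkey : Real.exp (x ^ 2 / 2) * σ * uc < 2 * t + uc := by
      have hy : x ^ 2 / 2 ≤ t / (2 * (t + uc)) := by
        have hx2 : x ^ 2 = t ^ 2 / σ ^ 2 := by rw [hxt]; field_simp
        rw [hx2, div_div, div_le_div_iff₀ (by positivity) hT]
        nlinarith
      have hy2 : t / (2 * (t + uc)) < 1 / 2 := by
        rw [div_lt_div_iff₀ hT (by norm_num)]; linarith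
      have h1y : (0:ℝ) < 1 - t / (2 * (t + uc)) := by linarith
      set y : ℝ := t / (2 * (t + uc)) with hydef
      have hd := Real.exp_pos y
      have ha : 1 - y ≤ (Real.exp y)⁻¹ := by
        have := Real.add_one_le_exp (-y)
        rw [Real.exp_neg] at this
        linarith
      have hme : Real.exp y * (1 - y) ≤ 1 := by
        have h5 := mul_le_mul_of_nonneg_left ha hd.le
        rw [mul_inv_cancel₀ hd.ne'] at h5
        linarith
      have hc : Real.exp (x ^ 2 / 2) ≤ Real.exp y := Real.exp_le_exp.2 hy
      have he1 : Real.exp (x ^ 2 / 2) * (1 - y) ≤ 1 :=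
        le_trans (mul_le_mul_of_nonneg_right hc h1y.le) hme
      -- so exp(x^2/2) ≤ (1-y)⁻¹ = 2(t+uc)/(t+2uc)
      have he2 : Real.exp (x ^ 2 / 2) ≤ 2 * (t + uc) / (t + 2 * uc) := by
        have hid : (1 - y) * (2 * (t + uc)) = t + 2 * uc := by
          rw [hydef]; field_simp; ring
        have h7 := mul_le_mul_of_nonneg_right he1 hT.le
        rw [le_div_iff₀ hD]
        calc Real.exp (x ^ 2 / 2) * (t + 2 * uc)
            = Real.exp (x ^ 2 / 2) * (1 - y) * (2 * (t + uc)) := by rw [mul_assoc, hid]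
          _ ≤ 1 * (2 * (t + uc)) := h7
          _ = 2 * (t + uc) := by ring
      have hfin : 2 * (t + uc) / (t + 2 * uc) * σ * uc < 2 * t + uc := by
        rw [div_mul_eq_mul_div, div_mul_eq_mul_div, div_lt_iff₀ hD]
        nlinarith [mul_lt_mul_of_pos_left hσ2
          (show (0:ℝ) < 2 * (t + uc) * uc by positivity)]
      calc Real.exp (x ^ 2 / 2) * σ * uc ≤ 2 * (t + uc) / (t + 2 * uc) * σ * uc := by
            have := mul_le_mul_of_nonneg_right (mul_le_mul_of_nonneg_right he2 hσ0.le) huc.le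
            linarith
        _ < 2 * t + uc := hfin
    -- conclude
    set P : ℝ := gaussPDF x with hPdef
    have hPE : Real.exp (x ^ 2 / 2) * P = (2 * uc)⁻¹ := by
      have h1 : Real.exp (-x ^ 2 / 2) * Real.exp (x ^ 2 / 2) = 1 := by
        rw [← Real.exp_add, show -x ^ 2 / 2 + x ^ 2 / 2 = 0 by ring, Real.exp_zero]
      rw [hPdef, gaussPDF_eq_uc x]
      calc Real.exp (x ^ 2 / 2) * ((2 * uc)⁻¹ * Real.exp (-x ^ 2 / 2))
          = (2 * uc)⁻¹ * (Real.exp (-x ^ 2 / 2) * Real.exp (x ^ 2 / 2)) := by ring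
        _ = (2 * uc)⁻¹ := by rw [h1, mul_one]
    have hstep : σ / 2 < (2 * t + uc) * P := by
      have h6 := mul_lt_mul_of_pos_right hkey hp
      have hL : Real.exp (x ^ 2 / 2) * σ * uc * P = σ * uc * (2 * uc)⁻¹ := by
        rw [show Real.exp (x ^ 2 / 2) * σ * uc * P = σ * uc * (Real.exp (x ^ 2 / 2) * P) by ring,
          hPE]
      have hσh : σ * uc * (2 * uc)⁻¹ = σ / 2 := by field_simp
      rw [hL, hσh] at h6
      exact h6
    have hfinal : 1 / 2 + x * P < (t + uc) / σ * P := by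
      have hdiff : (t + uc) / σ * P - x * P = (2 * t + uc) * P / σ := by
        rw [hxt]; field_simp; ring
      have : 1 / 2 < (2 * t + uc) * P / σ := by
        rw [lt_div_iff₀ hσ0]; linarith
      linarith
    calc gaussCDF x ≤ 1 / 2 + x * P := hΦ
      _ < (t + uc) / σ * P := hfinal

lemma rf''_le {σ : ℝ} (hσ : σ ∈ Set.Ioo (1/2 : ℝ) 1) {w : ℝ} (hw : w ∈ Set.Icc 0 uc) :
    rf'' σ w ≤ -(1/30) := by
  obtain ⟨hσ1, hσ2⟩ := hσ
  obtain ⟨hw0, hw1⟩ := hw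
  have hσ0 : 0 < σ := by linarith
  have huc := uc_pos
  set x : ℝ := (uc - w) / σ with hxdef
  have hx0 : 0 ≤ x := by
    rw [hxdef]; apply div_nonneg (by linarith) hσ0.le
  have hxσ : x * σ = uc - w := by rw [hxdef]; field_simp
  have hx2 : x ≤ 2 * uc := by nlinarith
  have hxsq : x ^ 2 ≤ 2 * Real.pi := by nlinarith [uc_sq]
  have hP := gaussPDF_pos x
  have hPge : (2 * uc)⁻¹ * Real.exp (-Real.pi) ≤ gaussPDF x := by
    rw [gaussPDF_eq_uc x]
    refine mul_le_mul_of_nonneg_left (Real.exp_le_exp.2 (by linarith)) (by positivity)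
  have h2σ : (2:ℝ) ≤ 2 / σ := by rw [le_div_iff₀ hσ0]; linarith
  have hq : 0 ≤ w * x / σ ^ 2 := by positivity
  have h2P : rf'' σ w ≤ -(2 * gaussPDF x) := by
    unfold rf''
    rw [← hxdef]
    nlinarith [mul_nonneg hP.le (show (0:ℝ) ≤ 2 / σ + w * x / σ ^ 2 - 2 by linarith)]
  have hE : Real.exp (-Real.pi) * Real.exp Real.pi = 1 := by
    rw [← Real.exp_add]; simp
  have h30 : uc ≤ 30 * Real.exp (-Real.pi) := by
    nlinarith [hE, exp_pi_lt, Real.exp_pos (-Real.pi), uc_lt, Real.exp_pos Real.pi]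
  have hfin : 1 / 30 ≤ 2 * ((2 * uc)⁻¹ * Real.exp (-Real.pi)) := by
    have hinv : (2:ℝ) * (2 * uc)⁻¹ = uc⁻¹ := by
      rw [mul_inv]; field_simp
    rw [show 2 * ((2 * uc)⁻¹ * Real.exp (-Real.pi))
        = Real.exp (-Real.pi) * (2 * (2 * uc)⁻¹) by ring, hinv,
      ← div_eq_mul_inv, le_div_iff₀ huc]
    linarith
  nlinarith [hPge]

lemma vstar_mem {σ : ℝ} (hσ : σ ∈ Set.Ioo (1/2 : ℝ) 1) (m : ℝ)
    (hm : ∀ w, rf σ w ≤ rf σ m) : m ∈ Set.Ioo 0 uc ∧ rf' σ m = 0 := by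
  have hσ0 : (0:ℝ) < σ := by have := hσ.1; linarith
  have hmax : IsMaxOn (rf σ) Set.univ m := fun w _ => hm w
  have hloc : IsLocalMax (rf σ) m := hmax.isLocalMax Filter.univ_mem
  have hderiv0 : rf' σ m = 0 := hloc.hasDerivAt_eq_zero (hasDerivAt_rf hσ0.ne' m)
  have hmlt : m < uc := by
    by_contra h
    push_neg at h
    exact absurd hderiv0 (ne_of_lt (rf'_tail_neg hσ h))
  have hrfuc : rf σ uc = uc / 2 := by
    unfold rf
    rw [show (uc - uc) / σ = 0 by simp, gaussCDF_zero]
    ring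
  have hmpos : 0 < m := by
    by_contra h
    push_neg at h
    have h1 : rf σ m ≤ 0 := mul_nonpos_of_nonpos_of_nonneg h (gaussCDF_pos _).le
    have h2 := hm uc
    rw [hrfuc] at h2
    nlinarith [uc_pos]
  exact ⟨⟨hmpos, hmlt⟩, hderiv0⟩

lemma gap {σ : ℝ} (hσ : σ ∈ Set.Ioo (1/2 : ℝ) 1) {m v : ℝ} (hm : m ∈ Set.Ioo 0 uc)
    (hm0 : rf' σ m = 0) (hv : v ∈ Set.Ioo 0 uc) :
    1 / 60 * (m - v) ^ 2 ≤ rf σ m - rf σ v := by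
  have hσ0 : (0:ℝ) < σ := by have := hσ.1; linarith
  set g : ℝ → ℝ := fun w => rf σ m - 1 / 60 * (w - m) ^ 2 - rf σ w with hgdef
  set g' : ℝ → ℝ := fun w => -(1 / 30) * (w - m) - rf' σ w with hg'def
  have hg : ∀ w, HasDerivAt g (g' w) w := by
    intro w
    have hq : HasDerivAt (fun w => 1 / 60 * (w - m) ^ 2) (1 / 30 * (w - m)) w := by
      have := (((hasDerivAt_id w).sub_const m).pow 2).const_mul (1/60 : ℝ)
      convert this using 1
      · rfl
      · rfl
      · rfl
      simp; ring
    have := ((hasDerivAt_const w (rf σ m)).sub hq).sub (hasDerivAt_rf hσ0.ne' w)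
    convert this using 1
    · rfl
    · rfl
    · rfl
    simp only [hg'def, zero_sub]
    ring
  have hg' : ∀ w, HasDerivAt g' (-(1/30) - rf'' σ w) w := by
    intro w
    have h1 : HasDerivAt (fun w : ℝ => -(1/30 : ℝ) * (w - m)) (-(1/30 : ℝ)) w := by
      have := ((hasDerivAt_id w).sub_const m).const_mul (-(1/30) : ℝ)
      convert this using 1
      · rfl
      · rfl
      · rfl
      simp
    exact h1.sub (hasDerivAt_rf' hσ0.ne' w)
  have hg'm : g' m = 0 := by simp [hg'def, hm0]
  have hmono : MonotoneOn g' (Set.Icc 0 uc) := by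
    refine monotoneOn_of_deriv_nonneg (convex_Icc 0 uc)
      (fun w _ => (hg' w).continuousAt.continuousWithinAt)
      (fun w _ => (hg' w).differentiableAt.differentiableWithinAt)
      (fun w hw => ?_)
    rw [(hg' w).deriv]
    rw [interior_Icc] at hw
    have := rf''_le hσ (Set.mem_Icc_of_Ioo hw)
    linarith
  have hmIcc : m ∈ Set.Icc 0 uc := Set.mem_Icc_of_Ioo hm
  have key : ∀ w ∈ Set.Icc (0:ℝ) uc, 0 ≤ g w - g m → True := fun _ _ _ => trivial
  have hgm : g m = 0 := by simp [hgdef]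
  have hfinal : 0 ≤ g v := by
    rcases le_total v m with hvm | hvm
    · have hanti : AntitoneOn g (Set.Icc v m) := by
        refine antitoneOn_of_deriv_nonpos (convex_Icc v m)
          (fun w _ => (hg w).continuousAt.continuousWithinAt)
          (fun w _ => (hg w).differentiableAt.differentiableWithinAt)
          (fun w hw => ?_)
        rw [(hg w).deriv]
        rw [interior_Icc] at hw
        have hwIcc : w ∈ Set.Icc 0 uc := ⟨by linarith [hv.1, hw.1], by linarith [hm.2, hw.2]⟩
        have := hmono hwIcc hmIcc (le_of_lt hw.2)
        linarith [hg'm]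
      have := hanti (Set.left_mem_Icc.2 hvm) (Set.right_mem_Icc.2 hvm) hvm
      linarith [hgm]
    · have hmono2 : MonotoneOn g (Set.Icc m v) := by
        refine monotoneOn_of_deriv_nonneg (convex_Icc m v)
          (fun w _ => (hg w).continuousAt.continuousWithinAt)
          (fun w _ => (hg w).differentiableAt.differentiableWithinAt)
          (fun w hw => ?_)
        rw [(hg w).deriv]
        rw [interior_Icc] at hw
        have hwIcc : w ∈ Set.Icc 0 uc := ⟨by linarith [hm.1, hw.1], by linarith [hv.2, hw.2]⟩
        have := hmono hmIcc hwIcc (le_of_lt hw.1)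
        linarith [hg'm]
      have := hmono2 (Set.left_mem_Icc.2 hvm) (Set.right_mem_Icc.2 hvm) hvm
      linarith [hgm]
  have : 0 ≤ rf σ m - 1 / 60 * (v - m) ^ 2 - rf σ v := hfinal
  nlinarith [this]

/-- Let `u* = √(π/2)`, `σ ∈ (1/2, 1)`, `v ∈ (0, u*)`, and
`r v σ = v Φ((u* - v)/σ)`. If `v*(σ)` maximizes `r · σ`, then
`r (v* σ) σ - r v σ ≥ (1/60) (v* σ - v)²`. -/
theorem stmt_18 (vstar : ℝ → ℝ)
    (hvmax : ∀ σ ∈ Set.Ioo (1 / 2 : ℝ) 1, ∀ w : ℝ,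
      w * gaussCDF ((Real.sqrt (Real.pi / 2) - w) / σ) ≤
        vstar σ * gaussCDF ((Real.sqrt (Real.pi / 2) - vstar σ) / σ)) :
    ∀ σ ∈ Set.Ioo (1 / 2 : ℝ) 1,
      ∀ v ∈ Set.Ioo (0 : ℝ) (Real.sqrt (Real.pi / 2)),
        (1 / 60) * (vstar σ - v) ^ 2 ≤
          vstar σ * gaussCDF ((Real.sqrt (Real.pi / 2) - vstar σ) / σ) -
            v * gaussCDF ((Real.sqrt (Real.pi / 2) - v) / σ) := by
  intro σ hσ v hv
  have hmax : ∀ w, rf σ w ≤ rf σ (vstar σ) := fun w => hvmax σ hσ w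
  obtain ⟨hmem, h0⟩ := vstar_mem hσ (vstar σ) hmax
  exact gap hσ hmem h0 (show v ∈ Set.Ioo 0 uc from hv)
end
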